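/- arXiv:2210.16446 — 5 statements merged into one kernel-verified Lean document; each statement's English description precedes it below -/
import Mathlib

section
/- Measurable imbeddability is transitive: if Λ measurably imbeds into Δ with coupling Σ₁ and Δ measurably imbeds into Γ with coupling Σ₂, then Λ measurably imbeds into Γ via the coupling Σ = (Σ₁ × Σ₂)/Δ where Δ acts diagonally, and the index satisfies [Γ:Λ]_Σ = [Γ:Δ]_{Σ₁}·[Δ:Λ]_{Σ₂}. -/
open MeasureTheory

/-- A measurable fundamental domain for an action of a group `G` on `Ω` given by the
plain map `a : G → Ω → Ω`. -/
def IsFundDom {G Ω : Type*} [MeasurableSpace Ω] (a : G → Ω → Ω) (μ : Measure Ω)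
    (s : Set Ω) : Prop :=
  NullMeasurableSet s μ ∧ (∀ᵐ x ∂μ, ∃ g : G, a g x ∈ s) ∧
    Pairwise fun g₁ g₂ : G => AEDisjoint μ (a g₁ ⁻¹' s) (a g₂ ⁻¹' s)

/-- A measured space with commuting measure-preserving actions of `Λ` and `Γ`
(equivalently, a measure-preserving action of `Λ × Γ`). -/
structure Coupling (Λ Γ Ω : Type*) [Group Λ] [Group Γ] [MeasurableSpace Ω]
    (μ : Measure Ω) where
  actL : Λ → Ω → Ω
  actR : Γ → Ω → Ω
  actL_one : ∀ x, actL 1 x = x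
  actL_mul : ∀ a b x, actL (a * b) x = actL a (actL b x)
  actR_one : ∀ x, actR 1 x = x
  actR_mul : ∀ a b x, actR (a * b) x = actR a (actR b x)
  comm : ∀ l g x, actL l (actR g x) = actR g (actL l x)
  mpL : ∀ l, MeasurePreserving (actL l) μ μ
  mpR : ∀ g, MeasurePreserving (actR g) μ μ

open Set Function

set_option linter.unusedSectionVars false

section Aux

variable {G Ω : Type*} [Group G] [Countable G] [MeasurableSpace Ω] {P : Measure Ω}
  {a : G → Ω → Ω} {F F' : Set Ω}

lemma fd_conull (h : IsFundDom a P F) : P ((⋃ g, a g ⁻¹' F)ᶜ) = 0 := by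
  have h2 := h.2.1
  rw [ae_iff] at h2
  convert h2 using 2
  ext x
  simp

lemma fd_congr (mp : ∀ g, MeasurePreserving (a g) P P)
    (h : IsFundDom a P F) (heq : F =ᵐ[P] F') : IsFundDom a P F' := by
  have hpre : ∀ g, (a g ⁻¹' F : Set Ω) =ᵐ[P] a g ⁻¹' F' := fun g =>
    (mp g).quasiMeasurePreserving.preimage_ae_eq heq
  refine ⟨h.1.congr heq, ?_, ?_⟩
  · have hmem : ∀ᵐ x ∂P, ∀ g, (a g x ∈ F ↔ a g x ∈ F') := by
      rw [ae_all_iff]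
      intro g
      exact Filter.eventuallyEq_set.mp (hpre g)
    filter_upwards [h.2.1, hmem] with x hx hx2
    obtain ⟨g, hg⟩ := hx
    exact ⟨g, (hx2 g).1 hg⟩
  · intro g₁ g₂ hne
    have := h.2.2 hne
    unfold AEDisjoint at this ⊢
    rwa [measure_congr (((hpre g₁).inter (hpre g₂)).symm)]

lemma fd_zero (mp : ∀ g, MeasurePreserving (a g) P P)
    (h : IsFundDom a P F) (h0 : P F = 0) : P Set.univ = 0 := by
  have hc := fd_conull h
  have hu : P (⋃ g, a g ⁻¹' F) = 0 := by
    refine measure_iUnion_null fun g => ?_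
    refine measure_mono_null (Set.preimage_mono (subset_toMeasurable P F)) ?_
    rw [(mp g).measure_preimage (measurableSet_toMeasurable P F).nullMeasurableSet,
      measure_toMeasurable, h0]
  refine le_antisymm ?_ zero_le
  calc P Set.univ = P ((⋃ g, a g ⁻¹' F) ∪ (⋃ g, a g ⁻¹' F)ᶜ) := by
        rw [Set.union_compl_self]
    _ ≤ P (⋃ g, a g ⁻¹' F) + P ((⋃ g, a g ⁻¹' F)ᶜ) := measure_union_le _ _
    _ = 0 := by rw [hu, hc, add_zero]

lemma fd_sigmaFinite (mp : ∀ g, MeasurePreserving (a g) P P)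
    (h : IsFundDom a P F) (hfin : P F < ⊤) : SigmaFinite P := by
  apply Measure.sigmaFinite_of_countable
    (S := insert (toMeasurable P ((⋃ g, a g ⁻¹' F)ᶜ))
      (Set.range fun g : G => a g ⁻¹' toMeasurable P F))
  · exact (Set.countable_range _).insert _
  · rintro s (rfl | ⟨g, rfl⟩)
    · rw [measure_toMeasurable, fd_conull h]
      exact ENNReal.zero_lt_top
    · rw [(mp g).measure_preimage (measurableSet_toMeasurable P F).nullMeasurableSet,
        measure_toMeasurable]
      exact hfin
  · rw [Set.sUnion_insert, Set.sUnion_range, Set.eq_univ_iff_forall]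
    intro x
    by_cases hx : x ∈ ⋃ g, a g ⁻¹' F
    · obtain ⟨g, hg⟩ := Set.mem_iUnion.mp hx
      exact Or.inr (Set.mem_iUnion.mpr ⟨g, subset_toMeasurable P F hg⟩)
    · exact Or.inl (subset_toMeasurable _ _ hx)

lemma fd_exchange (d : G → Ω → Ω) (d_one : ∀ x, d 1 x = x)
    (d_mul : ∀ a b x, d (a * b) x = d a (d b x))
    (mp : ∀ g, MeasurePreserving (d g) P P)
    (hFm : MeasurableSet F) (hF'm : MeasurableSet F')
    (hF : IsFundDom d P F) (hF' : IsFundDom d P F')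
    {S : Set Ω} (hSm : MeasurableSet S) (hSinv : ∀ g, d g ⁻¹' S = S) :
    P (S ∩ F) = P (S ∩ F') := by
  have key : ∀ (F₁ F₂ : Set Ω), MeasurableSet F₁ → MeasurableSet F₂ → IsFundDom d P F₂ →
      P (S ∩ F₁) = ∑' g : G, P (S ∩ F₁ ∩ d g ⁻¹' F₂) := by
    intro F₁ F₂ h1 h2 hfd2
    rw [← measure_inter_conull (fd_conull hfd2) (s := S ∩ F₁), Set.inter_iUnion,
      measure_iUnion₀ (fun g₁ g₂ hg => ((hfd2.2.2 hg).mono Set.inter_subset_right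
          Set.inter_subset_right))
        (fun g => ((hSm.inter h1).inter ((mp g).measurable h2)).nullMeasurableSet)]
  have term : ∀ g : G, P (S ∩ F ∩ d g ⁻¹' F') = P (S ∩ F' ∩ d g⁻¹ ⁻¹' F) := by
    intro g
    have hinv2 : ∀ z, d g⁻¹ (d g z) = z := by
      intro z; rw [← d_mul, inv_mul_cancel, d_one]
    have hset : S ∩ F ∩ d g ⁻¹' F' = d g ⁻¹' (S ∩ F' ∩ d g⁻¹ ⁻¹' F) := by
      ext z
      simp only [Set.mem_inter_iff, Set.mem_preimage, hinv2]
      have hzS : d g z ∈ S ↔ z ∈ S := by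
        conv_rhs => rw [← hSinv g]
        rfl
      tauto
    rw [hset, (mp g).measure_preimage
      (((hSm.inter hF'm).inter ((mp g⁻¹).measurable hFm)).nullMeasurableSet)]
  calc P (S ∩ F) = ∑' g : G, P (S ∩ F ∩ d g ⁻¹' F') := key F F' hFm hF'm hF'
    _ = ∑' g : G, P (S ∩ F' ∩ d g⁻¹ ⁻¹' F) := tsum_congr term
    _ = ∑' g : G, P (S ∩ F' ∩ d g ⁻¹' F) :=
        (Equiv.inv G).tsum_eq fun g => P (S ∩ F' ∩ d g ⁻¹' F)
    _ = P (S ∩ F') := (key F' F hF'm hFm hF).symm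

end Aux

/-- The σ-algebra of `d`-invariant measurable sets. -/
def invSigma {Δ Ω : Type*} [MeasurableSpace Ω] (d : Δ → Ω → Ω) : MeasurableSpace Ω where
  MeasurableSet' S := MeasurableSet S ∧ ∀ δ, d δ ⁻¹' S = S
  measurableSet_empty := ⟨MeasurableSet.empty, fun δ => by simp⟩
  measurableSet_compl := fun S hS => ⟨hS.1.compl, fun δ => by
    rw [Set.preimage_compl, hS.2 δ]⟩
  measurableSet_iUnion := fun f hf => ⟨MeasurableSet.iUnion fun i => (hf i).1, fun δ => by
    rw [Set.preimage_iUnion]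
    exact Set.iUnion_congr fun i => (hf i).2 δ⟩

lemma invSigma_le {Δ Ω : Type*} [m0 : MeasurableSpace Ω] (d : Δ → Ω → Ω) :
    invSigma d ≤ m0 := fun _ hS => hS.1

lemma measurableSet_invSigma {Δ Ω : Type*} [MeasurableSpace Ω] (d : Δ → Ω → Ω) (S : Set Ω) :
    MeasurableSet[invSigma d] S ↔ MeasurableSet S ∧ ∀ δ, d δ ⁻¹' S = S := Iff.rfl

section Null

variable {Ω₁ Ω₂ : Type*} [MeasurableSpace Ω₁] [MeasurableSpace Ω₂]
  {μ₁ : Measure Ω₁} {μ₂ : Measure Ω₂} [SFinite μ₂]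

lemma prod_left_null {N : Set Ω₁} (hN : μ₁ N = 0) :
    μ₁.prod μ₂ (N ×ˢ (univ : Set Ω₂)) = 0 :=
  measure_mono_null (Set.prod_mono (subset_toMeasurable μ₁ N) subset_rfl)
    (by rw [Measure.prod_prod, measure_toMeasurable, hN, zero_mul])

lemma prod_right_null {N : Set Ω₂} (hN : μ₂ N = 0) :
    μ₁.prod μ₂ ((univ : Set Ω₁) ×ˢ N) = 0 :=
  measure_mono_null (Set.prod_mono subset_rfl (subset_toMeasurable μ₂ N))
    (by rw [Measure.prod_prod, measure_toMeasurable, hN, mul_zero])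

/-- A fundamental domain on the first factor crossed with `univ` is a fundamental
domain for a diagonal action on the product. -/
lemma fd_prod {Δ : Type*} [Group Δ] [Countable Δ] (r₁ : Δ → Ω₁ → Ω₁) (l₂ : Δ → Ω₂ → Ω₂)
    {A : Set Ω₁} (hA : MeasurableSet A) (hfd : IsFundDom r₁ μ₁ A) :
    IsFundDom (fun δ (z : Ω₁ × Ω₂) => (r₁ δ z.1, l₂ δ z.2)) (μ₁.prod μ₂)
      (A ×ˢ (univ : Set Ω₂)) := by
  refine ⟨(hA.prod MeasurableSet.univ).nullMeasurableSet, ?_, ?_⟩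
  · rw [ae_iff]
    have hBad : μ₁ {x | ¬ ∃ δ, r₁ δ x ∈ A} = 0 := by
      have := hfd.2.1; rwa [ae_iff] at this
    refine measure_mono_null (fun z hz => ?_) (prod_left_null hBad)
    refine Set.mem_prod.mpr ⟨fun hc => ?_, trivial⟩
    obtain ⟨δ, hδ⟩ := hc
    exact hz ⟨δ, Set.mem_prod.mpr ⟨hδ, trivial⟩⟩
  · intro δ₁ δ₂ hne
    refine measure_mono_null (fun z hz => ?_)
      (prod_left_null (μ₁ := μ₁) (N := r₁ δ₁ ⁻¹' A ∩ r₁ δ₂ ⁻¹' A) (hfd.2.2 hne))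
    obtain ⟨h1, h2⟩ := hz
    exact Set.mem_prod.mpr ⟨⟨(Set.mem_prod.mp h1).1, (Set.mem_prod.mp h2).1⟩, trivial⟩

end Null

lemma fd_shift {Λ Δ Ω₁ : Type*} [Group Λ] [Group Δ] [Countable Δ] [MeasurableSpace Ω₁]
    {μ₁ : Measure Ω₁} (c₁ : Coupling Λ Δ Ω₁ μ₁) {X₁ : Set Ω₁}
    (hX₁ : IsFundDom c₁.actR μ₁ X₁) (lam : Λ) :
    IsFundDom c₁.actR μ₁ (c₁.actL lam ⁻¹' X₁) := by
  have hq := (c₁.mpL lam).quasiMeasurePreserving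
  refine ⟨hX₁.1.preimage hq, ?_, ?_⟩
  · rw [ae_iff]
    have hBad : μ₁ {x | ¬ ∃ δ, c₁.actR δ x ∈ X₁} = 0 := by
      have := hX₁.2.1; rwa [ae_iff] at this
    refine measure_mono_null (fun x hx => ?_) (hq.preimage_null hBad)
    intro hc
    obtain ⟨δ, hδ⟩ := hc
    exact hx ⟨δ, show c₁.actL lam (c₁.actR δ x) ∈ X₁ by rw [c₁.comm]; exact hδ⟩
  · intro δ₁ δ₂ hne
    refine measure_mono_null (fun x hx => ?_) (hq.preimage_null (hX₁.2.2 hne))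
    obtain ⟨h1, h2⟩ := hx
    rw [Set.mem_preimage, Set.mem_preimage, c₁.comm] at h1 h2
    exact ⟨h1, h2⟩

theorem MI_trans_aux {Λ Δ Γ : Type} [Group Λ] [Countable Λ] [Group Δ] [Countable Δ]
    [Group Γ] [Countable Γ]
    {Ω₁ : Type} [MeasurableSpace Ω₁] {μ₁ : Measure Ω₁} (c₁ : Coupling Λ Δ Ω₁ μ₁)
    {Ω₂ : Type} [MeasurableSpace Ω₂] {μ₂ : Measure Ω₂} (c₂ : Coupling Δ Γ Ω₂ μ₂)
    (X₁ Y₁ : Set Ω₁) (hX₁ : IsFundDom c₁.actR μ₁ X₁) (hY₁ : IsFundDom c₁.actL μ₁ Y₁)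
    (hX₁fin : μ₁ X₁ < ⊤)
    (X₂ Y₂ : Set Ω₂) (hX₂ : IsFundDom c₂.actR μ₂ X₂) (hY₂ : IsFundDom c₂.actL μ₂ Y₂)
    (hX₂fin : μ₂ X₂ < ⊤)
    (hX₁m : MeasurableSet X₁) (hY₁m : MeasurableSet Y₁)
    (hX₂m : MeasurableSet X₂) (hY₂m : MeasurableSet Y₂) :
    ∃ (Ω : Type) (_ : MeasurableSpace Ω) (μ : Measure Ω) (c : Coupling Λ Γ Ω μ)
      (X Y : Set Ω), IsFundDom c.actR μ X ∧ IsFundDom c.actL μ Y ∧ μ X < ⊤ ∧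
        μ Y / μ X = (μ₂ Y₂ / μ₂ X₂) * (μ₁ Y₁ / μ₁ X₁) := by
  classical
  haveI : SigmaFinite μ₁ := fd_sigmaFinite c₁.mpR hX₁ hX₁fin
  haveI : SigmaFinite μ₂ := fd_sigmaFinite c₂.mpR hX₂ hX₂fin
  set d : Δ → Ω₁ × Ω₂ → Ω₁ × Ω₂ := fun δ z => (c₁.actR δ z.1, c₂.actL δ z.2) with hd
  set L : Λ → Ω₁ × Ω₂ → Ω₁ × Ω₂ := fun l z => (c₁.actL l z.1, z.2) with hL
  set R : Γ → Ω₁ × Ω₂ → Ω₁ × Ω₂ := fun γ z => (z.1, c₂.actR γ z.2) with hR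
  set P : Measure (Ω₁ × Ω₂) := μ₁.prod μ₂ with hP
  set ν : Measure (Ω₁ × Ω₂) := P.restrict (X₁ ×ˢ Set.univ) with hν
  set μ : @Measure (Ω₁ × Ω₂) (invSigma d) := ν.trim (invSigma_le d) with hμ
  set X : Set (Ω₁ × Ω₂) := ⋃ δ, d δ ⁻¹' (X₁ ×ˢ X₂) with hX
  set Y : Set (Ω₁ × Ω₂) := ⋃ δ, d δ ⁻¹' (Y₁ ×ˢ Y₂) with hY
  -- basic action facts
  have d_one : ∀ z, d 1 z = z := fun z => by
    simp only [hd, c₁.actR_one, c₂.actL_one]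
  have d_mul : ∀ a b z, d (a * b) z = d a (d b z) := fun a b z => by
    simp only [hd, c₁.actR_mul, c₂.actL_mul]
  have d_mp : ∀ δ, MeasurePreserving (d δ) P P := fun δ => (c₁.mpR δ).prod (c₂.mpL δ)
  have L_mp : ∀ l, MeasurePreserving (L l) P P := fun l =>
    (c₁.mpL l).prod (MeasurePreserving.id μ₂)
  have R_mp : ∀ γ, MeasurePreserving (R γ) P P := fun γ =>
    (MeasurePreserving.id μ₁).prod (c₂.mpR γ)
  have L_d_comm : ∀ l δ z, L l (d δ z) = d δ (L l z) := fun l δ z => by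
    simp only [hL, hd, c₁.comm]
  have R_d_comm : ∀ γ δ z, R γ (d δ z) = d δ (R γ z) := fun γ δ z => by
    simp only [hR, hd, c₂.comm]
  -- saturations are invariant
  have sat_inv : ∀ (A : Set (Ω₁ × Ω₂)) (δ₀ : Δ),
      d δ₀ ⁻¹' (⋃ δ, d δ ⁻¹' A) = ⋃ δ, d δ ⁻¹' A := by
    intro A δ₀
    rw [Set.preimage_iUnion]
    have h1 : ∀ δ : Δ, d δ₀ ⁻¹' (d δ ⁻¹' A) = d (δ * δ₀) ⁻¹' A := by
      intro δ
      have hco : d δ ∘ d δ₀ = d (δ * δ₀) := funext fun z => (d_mul δ δ₀ z).symm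
      rw [← Set.preimage_comp, hco]
    calc (⋃ δ, d δ₀ ⁻¹' (d δ ⁻¹' A)) = ⋃ δ, d (δ * δ₀) ⁻¹' A := Set.iUnion_congr h1
      _ = ⋃ δ, d δ ⁻¹' A :=
          Function.Surjective.iUnion_comp (Equiv.mulRight δ₀).surjective
            (fun δ => d δ ⁻¹' A)
  have mS : ∀ {S : Set (Ω₁ × Ω₂)}, MeasurableSet[invSigma d] S → MeasurableSet S :=
    fun h => ((measurableSet_invSigma d _).mp h).1
  have mInv : ∀ {S : Set (Ω₁ × Ω₂)}, MeasurableSet[invSigma d] S →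
      ∀ δ, d δ ⁻¹' S = S := fun h => ((measurableSet_invSigma d _).mp h).2
  have mMk : ∀ {S : Set (Ω₁ × Ω₂)}, MeasurableSet S → (∀ δ, d δ ⁻¹' S = S) →
      MeasurableSet[invSigma d] S := fun h1 h2 => (measurableSet_invSigma d _).mpr ⟨h1, h2⟩
  have hX_meas : ∀ A : Set (Ω₁ × Ω₂), MeasurableSet A →
      MeasurableSet[invSigma d] (⋃ δ, d δ ⁻¹' A) :=
    fun A hA => mMk (MeasurableSet.iUnion fun δ => (d_mp δ).measurable hA) (sat_inv A)
  have hXm : MeasurableSet[invSigma d] X := hX_meas _ (hX₁m.prod hX₂m)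
  have hYm : MeasurableSet[invSigma d] Y := hX_meas _ (hY₁m.prod hY₂m)
  have hμ_eq : ∀ S : Set (Ω₁ × Ω₂), MeasurableSet[invSigma d] S → μ S = ν S :=
    fun S hS => trim_measurableSet_eq (invSigma_le d) hS
  -- measurability of L and R for the invariant σ-algebra
  have hLm : ∀ l, @Measurable _ _ (invSigma d) (invSigma d) (L l) := by
    intro l S hS
    refine mMk ((((c₁.mpL l).measurable.comp measurable_fst).prodMk measurable_snd)
      (mS hS)) fun δ => ?_
    rw [← Set.preimage_comp]
    have hco : L l ∘ d δ = d δ ∘ L l := funext fun z => L_d_comm l δ z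
    rw [hco, Set.preimage_comp, mInv hS δ]
  have hRm : ∀ γ, @Measurable _ _ (invSigma d) (invSigma d) (R γ) := by
    intro γ S hS
    refine mMk ((measurable_fst.prodMk ((c₂.mpR γ).measurable.comp measurable_snd))
      (mS hS)) fun δ => ?_
    rw [← Set.preimage_comp]
    have hco : R γ ∘ d δ = d δ ∘ R γ := funext fun z => R_d_comm γ δ z
    rw [hco, Set.preimage_comp, mInv hS δ]
  -- fundamental domains for the diagonal action on the product
  have hfdX₁ : IsFundDom d P (X₁ ×ˢ Set.univ) := fd_prod c₁.actR c₂.actL hX₁m hX₁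
  -- invariance of ν under L
  have hν_L : ∀ (S : Set (Ω₁ × Ω₂)), MeasurableSet[invSigma d] S →
      ∀ l, ν (L l ⁻¹' S) = ν S := by
    intro S hS l
    have hSm := mS hS
    have hshift : MeasurableSet (c₁.actL l⁻¹ ⁻¹' X₁) := (c₁.mpL l⁻¹).measurable hX₁m
    rw [hν, Measure.restrict_apply ((L_mp l).measurable hSm), Measure.restrict_apply hSm]
    have hset : L l ⁻¹' S ∩ X₁ ×ˢ Set.univ
        = L l ⁻¹' (S ∩ (c₁.actL l⁻¹ ⁻¹' X₁) ×ˢ Set.univ) := by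
      ext z
      have hz : c₁.actL l⁻¹ (c₁.actL l z.1) = z.1 := by
        rw [← c₁.actL_mul, inv_mul_cancel, c₁.actL_one]
      simp only [Set.mem_inter_iff, Set.mem_preimage, Set.mem_prod, Set.mem_univ,
        and_true, hL, hz]
    rw [hset, (L_mp l).measure_preimage
      ((hSm.inter (hshift.prod MeasurableSet.univ)).nullMeasurableSet)]
    exact fd_exchange d d_one d_mul d_mp (hshift.prod MeasurableSet.univ)
      (hX₁m.prod MeasurableSet.univ)
      (fd_prod c₁.actR c₂.actL hshift (fd_shift c₁ hX₁ l⁻¹)) hfdX₁ hSm (mInv hS)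
  -- invariance of ν under R
  have hν_R : ∀ (S : Set (Ω₁ × Ω₂)), MeasurableSet S → ∀ γ, ν (R γ ⁻¹' S) = ν S := by
    intro S hSm γ
    rw [hν, Measure.restrict_apply ((R_mp γ).measurable hSm), Measure.restrict_apply hSm]
    have hset : R γ ⁻¹' S ∩ X₁ ×ˢ Set.univ = R γ ⁻¹' (S ∩ X₁ ×ˢ Set.univ) := by
      ext z
      simp only [Set.mem_inter_iff, Set.mem_preimage, Set.mem_prod, Set.mem_univ,
        and_true, hR]
    rw [hset, (R_mp γ).measure_preimage
      ((hSm.inter (hX₁m.prod MeasurableSet.univ)).nullMeasurableSet)]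
  have hmpL : ∀ l, @MeasurePreserving _ _ (invSigma d) (invSigma d) (L l) μ μ := by
    intro l
    have hmap : ∀ (S : Set (Ω₁ × Ω₂)), MeasurableSet[invSigma d] S →
        @Measure.map _ _ (invSigma d) (invSigma d) (L l) μ S = μ (L l ⁻¹' S) :=
      fun S hS => Measure.map_apply (hLm l) hS
    refine @MeasurePreserving.mk _ _ (invSigma d) (invSigma d) (L l) μ μ (hLm l) ?_
    refine @Measure.ext _ (invSigma d) _ _ fun S hS => ?_
    rw [hmap S hS, hμ_eq _ (hLm l hS), hμ_eq _ hS, hν_L S hS l]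
  have hmpR : ∀ γ, @MeasurePreserving _ _ (invSigma d) (invSigma d) (R γ) μ μ := by
    intro γ
    have hmap : ∀ (S : Set (Ω₁ × Ω₂)), MeasurableSet[invSigma d] S →
        @Measure.map _ _ (invSigma d) (invSigma d) (R γ) μ S = μ (R γ ⁻¹' S) :=
      fun S hS => Measure.map_apply (hRm γ) hS
    refine @MeasurePreserving.mk _ _ (invSigma d) (invSigma d) (R γ) μ μ (hRm γ) ?_
    refine @Measure.ext _ (invSigma d) _ _ fun S hS => ?_
    rw [hmap S hS, hμ_eq _ (hRm γ hS), hμ_eq _ hS, hν_R S (mS hS) γ]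
  -- covering for X
  have hXcov : ∀ᵐ z ∂μ, ∃ γ, R γ z ∈ X := by
    rw [ae_iff]
    have hBset : {z | ¬ ∃ γ, R γ z ∈ X} = (⋃ γ, R γ ⁻¹' X)ᶜ := by
      ext z; simp
    have hBm : MeasurableSet[invSigma d] ((⋃ γ, R γ ⁻¹' X)ᶜ) :=
      (MeasurableSet.iUnion fun γ => hRm γ hXm).compl
    rw [hBset, hμ_eq _ hBm, hν, Measure.restrict_apply (mS hBm)]
    have hBad₂ : μ₂ {ω : Ω₂ | ¬ ∃ γ, c₂.actR γ ω ∈ X₂} = 0 := by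
      have := hX₂.2.1; rwa [ae_iff] at this
    refine measure_mono_null (fun z hz => ?_) (prod_right_null hBad₂)
    obtain ⟨hz1, hz2⟩ := hz
    refine Set.mem_prod.mpr ⟨trivial, fun hc => ?_⟩
    obtain ⟨γ, hγ⟩ := hc
    refine hz1 (Set.mem_iUnion.mpr ⟨γ, Set.mem_iUnion.mpr ⟨1, ?_⟩⟩)
    show d 1 (R γ z) ∈ X₁ ×ˢ X₂
    rw [d_one]
    exact Set.mem_prod.mpr ⟨(Set.mem_prod.mp hz2).1, hγ⟩
  -- a.e. disjointness for X
  have hX₁id : c₁.actR (1 : Δ) ⁻¹' X₁ = X₁ := by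
    ext x; simp [c₁.actR_one]
  have hXdisj : Pairwise fun γ₁ γ₂ : Γ => AEDisjoint μ (R γ₁ ⁻¹' X) (R γ₂ ⁻¹' X) := by
    intro γ₁ γ₂ hne
    have hCm : MeasurableSet[invSigma d] (R γ₁ ⁻¹' X ∩ R γ₂ ⁻¹' X) :=
      (hRm γ₁ hXm).inter (hRm γ₂ hXm)
    show μ (R γ₁ ⁻¹' X ∩ R γ₂ ⁻¹' X) = 0
    rw [hμ_eq _ hCm, hν, Measure.restrict_apply (mS hCm)]
    have hN₁ : P (⋃ (δ : Δ), ⋃ (_ : δ ≠ 1),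
        (toMeasurable μ₁ (X₁ ∩ c₁.actR δ ⁻¹' X₁)) ×ˢ (Set.univ : Set Ω₂)) = 0 := by
      refine measure_iUnion_null fun δ => measure_iUnion_null fun hδ => prod_left_null ?_
      rw [measure_toMeasurable]
      have h : AEDisjoint μ₁ (c₁.actR (1 : Δ) ⁻¹' X₁) (c₁.actR δ ⁻¹' X₁) :=
        hX₁.2.2 (show (1 : Δ) ≠ δ from fun h => hδ h.symm)
      unfold AEDisjoint at h
      rwa [hX₁id] at h
    have hN₂ : P ((Set.univ : Set Ω₁) ×ˢ
        toMeasurable μ₂ (c₂.actR γ₁ ⁻¹' X₂ ∩ c₂.actR γ₂ ⁻¹' X₂)) = 0 :=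
      prod_right_null (by rw [measure_toMeasurable]; exact hX₂.2.2 hne)
    refine measure_mono_null (fun z hz => ?_) (measure_union_null hN₁ hN₂)
    obtain ⟨⟨hz1, hz2⟩, hz3⟩ := hz
    obtain ⟨δ₁, hδ₁⟩ := Set.mem_iUnion.mp hz1
    obtain ⟨δ₂, hδ₂⟩ := Set.mem_iUnion.mp hz2
    rw [Set.mem_preimage] at hδ₁ hδ₂
    have h1 := Set.mem_prod.mp hδ₁
    have h2 := Set.mem_prod.mp hδ₂
    have hz31 : z.1 ∈ X₁ := (Set.mem_prod.mp hz3).1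
    by_cases e₁ : δ₁ = 1
    · by_cases e₂ : δ₂ = 1
      · subst e₁; subst e₂
        refine Or.inr (Set.mem_prod.mpr ⟨trivial, subset_toMeasurable _ _ ⟨?_, ?_⟩⟩)
        · have := h1.2
          rwa [show (d 1 (R γ₁ z)).2 = c₂.actL 1 (c₂.actR γ₁ z.2) from rfl,
            c₂.actL_one] at this
        · have := h2.2
          rwa [show (d 1 (R γ₂ z)).2 = c₂.actL 1 (c₂.actR γ₂ z.2) from rfl,
            c₂.actL_one] at this
      · refine Or.inl (Set.mem_iUnion.mpr ⟨δ₂, Set.mem_iUnion.mpr ⟨e₂,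
          Set.mem_prod.mpr ⟨subset_toMeasurable _ _ ⟨hz31, h2.1⟩, trivial⟩⟩⟩)
    · refine Or.inl (Set.mem_iUnion.mpr ⟨δ₁, Set.mem_iUnion.mpr ⟨e₁,
        Set.mem_prod.mpr ⟨subset_toMeasurable _ _ ⟨hz31, h1.1⟩, trivial⟩⟩⟩)
  -- covering for Y
  have hYcov : ∀ᵐ z ∂μ, ∃ l, L l z ∈ Y := by
    rw [ae_iff]
    have hBset : {z | ¬ ∃ l, L l z ∈ Y} = (⋃ l, L l ⁻¹' Y)ᶜ := by
      ext z; simp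
    have hBm : MeasurableSet[invSigma d] ((⋃ l, L l ⁻¹' Y)ᶜ) :=
      (MeasurableSet.iUnion fun l => hLm l hYm).compl
    rw [hBset, hμ_eq _ hBm]
    have hBadY₂ : μ₂ {ω : Ω₂ | ¬ ∃ δ, c₂.actL δ ω ∈ Y₂} = 0 := by
      have := hY₂.2.1; rwa [ae_iff] at this
    have hBadY₁ : μ₁ {x : Ω₁ | ¬ ∃ l : Λ, c₁.actL l x ∈ Y₁} = 0 := by
      have := hY₁.2.1; rwa [ae_iff] at this
    have hnull : P ((Set.univ ×ˢ toMeasurable μ₂ {ω : Ω₂ | ¬ ∃ δ, c₂.actL δ ω ∈ Y₂}) ∪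
        ⋃ δ : Δ, (toMeasurable μ₁ (c₁.actR δ ⁻¹' {x : Ω₁ | ¬ ∃ l : Λ, c₁.actL l x ∈ Y₁}))
          ×ˢ (Set.univ : Set Ω₂)) = 0 := by
      refine measure_union_null
        (prod_right_null (by rw [measure_toMeasurable]; exact hBadY₂))
        (measure_iUnion_null fun δ => prod_left_null ?_)
      rw [measure_toMeasurable]
      exact (c₁.mpR δ).quasiMeasurePreserving.preimage_null hBadY₁
    refine le_antisymm ?_ zero_le
    calc ν ((⋃ l, L l ⁻¹' Y)ᶜ) ≤ P ((⋃ l, L l ⁻¹' Y)ᶜ) :=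
          Measure.le_iff'.mp Measure.restrict_le_self _
      _ ≤ P ((Set.univ ×ˢ toMeasurable μ₂ {ω : Ω₂ | ¬ ∃ δ, c₂.actL δ ω ∈ Y₂}) ∪
          ⋃ δ : Δ, (toMeasurable μ₁ (c₁.actR δ ⁻¹' {x : Ω₁ | ¬ ∃ l : Λ, c₁.actL l x ∈ Y₁}))
            ×ˢ (Set.univ : Set Ω₂)) := ?_
      _ = 0 := hnull
    refine measure_mono fun z hz => ?_
    rw [Set.mem_compl_iff] at hz
    by_cases hc1 : z.2 ∈ toMeasurable μ₂ {ω : Ω₂ | ¬ ∃ δ, c₂.actL δ ω ∈ Y₂}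
    · exact Or.inl (Set.mem_prod.mpr ⟨trivial, hc1⟩)
    have hz2 : ∃ δ, c₂.actL δ z.2 ∈ Y₂ := by
      by_contra hcc
      exact hc1 (subset_toMeasurable _ _ hcc)
    obtain ⟨δ₀, hδ₀⟩ := hz2
    by_cases hc2 : z.1 ∈ toMeasurable μ₁
        (c₁.actR δ₀ ⁻¹' {x : Ω₁ | ¬ ∃ l : Λ, c₁.actL l x ∈ Y₁})
    · exact Or.inr (Set.mem_iUnion.mpr ⟨δ₀, Set.mem_prod.mpr ⟨hc2, trivial⟩⟩)
    have hz1 : ∃ l : Λ, c₁.actL l (c₁.actR δ₀ z.1) ∈ Y₁ := by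
      by_contra hcc
      exact hc2 (subset_toMeasurable _ _ hcc)
    obtain ⟨l, hl⟩ := hz1
    refine absurd (Set.mem_iUnion.mpr ⟨l, Set.mem_iUnion.mpr ⟨δ₀, ?_⟩⟩) hz
    show d δ₀ (L l z) ∈ Y₁ ×ˢ Y₂
    refine Set.mem_prod.mpr ⟨?_, hδ₀⟩
    show c₁.actR δ₀ (c₁.actL l z.1) ∈ Y₁
    rw [← c₁.comm]
    exact hl
  -- a.e. disjointness for Y
  have hYdisj : Pairwise fun l₁ l₂ : Λ => AEDisjoint μ (L l₁ ⁻¹' Y) (L l₂ ⁻¹' Y) := by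
    intro l₁ l₂ hne
    have hCm : MeasurableSet[invSigma d] (L l₁ ⁻¹' Y ∩ L l₂ ⁻¹' Y) :=
      (hLm l₁ hYm).inter (hLm l₂ hYm)
    show μ (L l₁ ⁻¹' Y ∩ L l₂ ⁻¹' Y) = 0
    rw [hμ_eq _ hCm]
    have hD : μ₁ (c₁.actL l₁ ⁻¹' Y₁ ∩ c₁.actL l₂ ⁻¹' Y₁) = 0 := hY₁.2.2 hne
    have hnull : P ((⋃ (p : Δ × Δ), ⋃ (_ : p.1 ≠ p.2), Set.univ ×ˢ
          toMeasurable μ₂ (c₂.actL p.1 ⁻¹' Y₂ ∩ c₂.actL p.2 ⁻¹' Y₂)) ∪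
        ⋃ δ : Δ, (toMeasurable μ₁ (c₁.actR δ ⁻¹' (c₁.actL l₁ ⁻¹' Y₁ ∩ c₁.actL l₂ ⁻¹' Y₁)))
          ×ˢ (Set.univ : Set Ω₂)) = 0 := by
      refine measure_union_null
        (measure_iUnion_null fun p => measure_iUnion_null fun hp =>
          prod_right_null (by rw [measure_toMeasurable]; exact hY₂.2.2 hp))
        (measure_iUnion_null fun δ => prod_left_null ?_)
      rw [measure_toMeasurable]
      exact (c₁.mpR δ).quasiMeasurePreserving.preimage_null hD
    refine le_antisymm ?_ zero_le
    calc ν (L l₁ ⁻¹' Y ∩ L l₂ ⁻¹' Y) ≤ P (L l₁ ⁻¹' Y ∩ L l₂ ⁻¹' Y) :=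
          Measure.le_iff'.mp Measure.restrict_le_self _
      _ ≤ P ((⋃ (p : Δ × Δ), ⋃ (_ : p.1 ≠ p.2), Set.univ ×ˢ
          toMeasurable μ₂ (c₂.actL p.1 ⁻¹' Y₂ ∩ c₂.actL p.2 ⁻¹' Y₂)) ∪
        ⋃ δ : Δ, (toMeasurable μ₁ (c₁.actR δ ⁻¹' (c₁.actL l₁ ⁻¹' Y₁ ∩ c₁.actL l₂ ⁻¹' Y₁)))
          ×ˢ (Set.univ : Set Ω₂)) := ?_
      _ = 0 := hnull
    refine measure_mono fun z hz => ?_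
    obtain ⟨hz1, hz2⟩ := hz
    obtain ⟨δ₁, hδ₁⟩ := Set.mem_iUnion.mp hz1
    obtain ⟨δ₂, hδ₂⟩ := Set.mem_iUnion.mp hz2
    rw [Set.mem_preimage] at hδ₁ hδ₂
    have h1 := Set.mem_prod.mp hδ₁
    have h2 := Set.mem_prod.mp hδ₂
    by_cases e : δ₁ = δ₂
    · subst e
      refine Or.inr (Set.mem_iUnion.mpr ⟨δ₁, Set.mem_prod.mpr
        ⟨subset_toMeasurable _ _ ?_, trivial⟩⟩)
      constructor
      · show c₁.actL l₁ (c₁.actR δ₁ z.1) ∈ Y₁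
        rw [c₁.comm]
        exact h1.1
      · show c₁.actL l₂ (c₁.actR δ₁ z.1) ∈ Y₁
        rw [c₁.comm]
        exact h2.1
    · exact Or.inl (Set.mem_iUnion.mpr ⟨(δ₁, δ₂), Set.mem_iUnion.mpr ⟨e,
        Set.mem_prod.mpr ⟨trivial, subset_toMeasurable _ _ ⟨h1.2, h2.2⟩⟩⟩⟩)
  -- measures of the saturations
  have measure_sat : ∀ (A₁ : Set Ω₁) (A₂ : Set Ω₂), MeasurableSet A₁ → MeasurableSet A₂ →
      (Pairwise fun δ₁ δ₂ : Δ =>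
        AEDisjoint P (d δ₁ ⁻¹' (A₁ ×ˢ A₂)) (d δ₂ ⁻¹' (A₁ ×ˢ A₂))) →
      ν (⋃ δ, d δ ⁻¹' (A₁ ×ˢ A₂)) = μ₁ A₁ * μ₂ A₂ := by
    intro A₁ A₂ hA₁ hA₂ hdisj
    have hAm : MeasurableSet (A₁ ×ˢ A₂) := hA₁.prod hA₂
    rw [hν, Measure.restrict_apply (MeasurableSet.iUnion fun δ => (d_mp δ).measurable hAm),
      Set.iUnion_inter, measure_iUnion₀
        (fun δ₁ δ₂ h => ((hdisj h).mono Set.inter_subset_left Set.inter_subset_left))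
        (fun δ => (((d_mp δ).measurable hAm).inter
          (hX₁m.prod MeasurableSet.univ)).nullMeasurableSet)]
    have hterm : ∀ δ : Δ, P (d δ ⁻¹' (A₁ ×ˢ A₂) ∩ X₁ ×ˢ Set.univ)
        = μ₁ (A₁ ∩ c₁.actR δ⁻¹ ⁻¹' X₁) * μ₂ A₂ := by
      intro δ
      have hinv : ∀ x, c₁.actR δ⁻¹ (c₁.actR δ x) = x := fun x => by
        rw [← c₁.actR_mul, inv_mul_cancel, c₁.actR_one]
      have h1 : d δ ⁻¹' (A₁ ×ˢ A₂) ∩ X₁ ×ˢ Set.univ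
          = d δ ⁻¹' ((A₁ ∩ c₁.actR δ⁻¹ ⁻¹' X₁) ×ˢ A₂) := by
        ext z
        simp only [Set.mem_inter_iff, Set.mem_preimage, Set.mem_prod, Set.mem_univ,
          and_true, hd, hinv]
        tauto
      rw [h1, (d_mp δ).measure_preimage
        ((hA₁.inter ((c₁.mpR δ⁻¹).measurable hX₁m)).prod hA₂).nullMeasurableSet,
        Measure.prod_prod]
    rw [tsum_congr hterm, ENNReal.tsum_mul_right]
    congr 1
    have hre := (Equiv.inv Δ).tsum_eq (fun δ => μ₁ (A₁ ∩ c₁.actR δ ⁻¹' X₁))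
    rw [show (∑' δ : Δ, μ₁ (A₁ ∩ c₁.actR δ⁻¹ ⁻¹' X₁))
        = ∑' δ : Δ, μ₁ (A₁ ∩ c₁.actR δ ⁻¹' X₁) from hre,
      ← measure_iUnion₀
        (fun δ₁ δ₂ h => ((hX₁.2.2 h).mono Set.inter_subset_right Set.inter_subset_right))
        (fun δ => (hA₁.inter ((c₁.mpR δ).measurable hX₁m)).nullMeasurableSet),
      ← Set.inter_iUnion, measure_inter_conull (fd_conull hX₁)]
  have hμX : μ X = μ₁ X₁ * μ₂ X₂ := by
    rw [hμ_eq _ hXm]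
    apply measure_sat _ _ hX₁m hX₂m
    intro δ₁ δ₂ hne
    refine measure_mono_null (fun z hz => ?_)
      (prod_left_null (N := c₁.actR δ₁ ⁻¹' X₁ ∩ c₁.actR δ₂ ⁻¹' X₁) (hX₁.2.2 hne))
    obtain ⟨h1, h2⟩ := hz
    exact Set.mem_prod.mpr ⟨⟨(Set.mem_prod.mp h1).1, (Set.mem_prod.mp h2).1⟩, trivial⟩
  have hμY : μ Y = μ₁ Y₁ * μ₂ Y₂ := by
    rw [hμ_eq _ hYm]
    apply measure_sat _ _ hY₁m hY₂m
    intro δ₁ δ₂ hne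
    refine measure_mono_null (fun z hz => ?_)
      (prod_right_null (N := c₂.actL δ₁ ⁻¹' Y₂ ∩ c₂.actL δ₂ ⁻¹' Y₂) (hY₂.2.2 hne))
    obtain ⟨h1, h2⟩ := hz
    exact Set.mem_prod.mpr ⟨trivial, ⟨(Set.mem_prod.mp h1).2, (Set.mem_prod.mp h2).2⟩⟩
  -- assemble
  refine ⟨Ω₁ × Ω₂, invSigma d, μ,
    @Coupling.mk Λ Γ (Ω₁ × Ω₂) _ _ (invSigma d) μ L R
      (fun z => by simp [hL, c₁.actL_one])
      (fun a b z => by simp [hL, c₁.actL_mul])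
      (fun z => by simp [hR, c₂.actR_one])
      (fun a b z => by simp [hR, c₂.actR_mul])
      (fun l g z => rfl) hmpL hmpR, X, Y,
    ⟨hXm.nullMeasurableSet, hXcov, hXdisj⟩,
    ⟨hYm.nullMeasurableSet, hYcov, hYdisj⟩, ?_, ?_⟩
  · rw [hμX]
    exact ENNReal.mul_lt_top hX₁fin hX₂fin
  · rw [hμX, hμY]
    by_cases h1 : μ₁ X₁ = 0
    · have h1' : μ₁ Y₁ = 0 :=
        measure_mono_null (Set.subset_univ _) (fd_zero c₁.mpR hX₁ h1)
      simp [h1, h1']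
    by_cases h2 : μ₂ X₂ = 0
    · have h2' : μ₂ Y₂ = 0 :=
        measure_mono_null (Set.subset_univ _) (fd_zero c₂.mpR hX₂ h2)
      simp [h2, h2']
    rw [div_eq_mul_inv, div_eq_mul_inv, div_eq_mul_inv,
      ENNReal.mul_inv (Or.inl h1) (Or.inl hX₁fin.ne)]
    ring

/-- transitivity of measurable imbeddability. Given an MI-coupling of
`Λ` into `Δ` with fundamental domains `Y₁` (for `Λ`) and `X₁` (for `Δ`), and an
MI-coupling of `Δ` into `Γ` with fundamental domains `Y₂` (for `Δ`) and `X₂` (for `Γ`),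
there is an MI-coupling of `Λ` into `Γ` (the quotient of the product by the diagonal
`Δ`-action) whose index is the product of the two indices. -/
theorem MI_trans {Λ Δ Γ : Type} [Group Λ] [Countable Λ] [Group Δ] [Countable Δ]
    [Group Γ] [Countable Γ]
    {Ω₁ : Type} [MeasurableSpace Ω₁] {μ₁ : Measure Ω₁} (c₁ : Coupling Λ Δ Ω₁ μ₁)
    {Ω₂ : Type} [MeasurableSpace Ω₂] {μ₂ : Measure Ω₂} (c₂ : Coupling Δ Γ Ω₂ μ₂)
    (X₁ Y₁ : Set Ω₁) (hX₁ : IsFundDom c₁.actR μ₁ X₁) (hY₁ : IsFundDom c₁.actL μ₁ Y₁)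
    (hX₁fin : μ₁ X₁ < ⊤)
    (X₂ Y₂ : Set Ω₂) (hX₂ : IsFundDom c₂.actR μ₂ X₂) (hY₂ : IsFundDom c₂.actL μ₂ Y₂)
    (hX₂fin : μ₂ X₂ < ⊤) :
    ∃ (Ω : Type) (_ : MeasurableSpace Ω) (μ : Measure Ω) (c : Coupling Λ Γ Ω μ)
      (X Y : Set Ω), IsFundDom c.actR μ X ∧ IsFundDom c.actL μ Y ∧ μ X < ⊤ ∧
        μ Y / μ X = (μ₂ Y₂ / μ₂ X₂) * (μ₁ Y₁ / μ₁ X₁) := by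
  have hX₁' : IsFundDom c₁.actR μ₁ (toMeasurable μ₁ X₁) :=
    fd_congr c₁.mpR hX₁ hX₁.1.toMeasurable_ae_eq.symm
  have hY₁' : IsFundDom c₁.actL μ₁ (toMeasurable μ₁ Y₁) :=
    fd_congr c₁.mpL hY₁ hY₁.1.toMeasurable_ae_eq.symm
  have hX₂' : IsFundDom c₂.actR μ₂ (toMeasurable μ₂ X₂) :=
    fd_congr c₂.mpR hX₂ hX₂.1.toMeasurable_ae_eq.symm
  have hY₂' : IsFundDom c₂.actL μ₂ (toMeasurable μ₂ Y₂) :=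
    fd_congr c₂.mpL hY₂ hY₂.1.toMeasurable_ae_eq.symm
  have hmain := MI_trans_aux c₁ c₂ (toMeasurable μ₁ X₁) (toMeasurable μ₁ Y₁) hX₁' hY₁'
    (by rwa [measure_toMeasurable]) (toMeasurable μ₂ X₂) (toMeasurable μ₂ Y₂) hX₂' hY₂'
    (by rwa [measure_toMeasurable]) (measurableSet_toMeasurable _ _)
    (measurableSet_toMeasurable _ _) (measurableSet_toMeasurable _ _)
    (measurableSet_toMeasurable _ _)
  simpa only [measure_toMeasurable] using hmain
end

section
/- Suppose (X,μ) is a probability space with a measure-preserving Λ-action and α: Λ × X → Γ is a measurable cocycle (α(λλ',x) = α(λ,λ'·x)α(λ',x)) satisfying α(λ,x) = e ⟺ λ = e for all x. Then the formulas γ∙(γ̄,x) = (γγ̄, x) and λ∙(γ̄,x) = (γ̄ α(λ,x)⁻¹, λ·x) define commuting measure-preserving actions of Γ and Λ on Ω := Γ × X (with counting measure times μ), and {e} × X is a fundamental domain for the Γ-action. -/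
open MeasureTheory

lemma count_sigmaFinite {Γ : Type} [Countable Γ] [MeasurableSpace Γ]
    [MeasurableSingletonClass Γ] : SigmaFinite (Measure.count : Measure Γ) := by
  refine Measure.sigmaFinite_of_countable (S := Set.range fun γ : Γ => ({γ} : Set Γ))
    (Set.countable_range _) ?_ ?_
  · rintro s ⟨γ, rfl⟩
    simp [Measure.count_singleton]
  · rw [Set.sUnion_range]
    simp [Set.iUnion_of_singleton]

lemma count_pres {Γ : Type} [Countable Γ] [MeasurableSpace Γ]
    [MeasurableSingletonClass Γ] (e : Γ ≃ Γ) :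
    MeasurePreserving e Measure.count Measure.count := by
  refine ⟨measurable_of_countable _, ?_⟩
  ext s hs
  rw [Measure.map_apply (measurable_of_countable _) hs, ← Equiv.image_symm_eq_preimage,
    Measure.count_injective_image e.symm.injective]

lemma twist_pres {Γ X : Type} [Group Γ] [Countable Γ] [MeasurableSpace Γ]
    [DiscreteMeasurableSpace Γ] [MeasurableSpace X] (μ : Measure X) [SFinite μ]
    (g : X → Γ) (hg : Measurable g) :
    MeasurePreserving (fun p : Γ × X => (p.1 * (g p.2)⁻¹, p.2))
      (Measure.count.prod μ) (Measure.count.prod μ) := by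
  haveI : SigmaFinite (Measure.count : Measure Γ) := count_sigmaFinite
  have hm : Measurable (fun p : Γ × X => (p.1 * (g p.2)⁻¹, p.2)) := by
    refine Measurable.prod ?_ measurable_snd
    exact (measurable_of_countable (fun q : Γ × Γ => q.1 * q.2⁻¹)).comp
      (measurable_fst.prodMk (hg.comp measurable_snd))
  refine ⟨hm, ?_⟩
  ext s hs
  rw [Measure.map_apply hm hs, Measure.prod_apply_symm (hm hs), Measure.prod_apply_symm hs]
  congr 1
  funext x
  have hset : ((fun γ : Γ => (γ, x)) ⁻¹' ((fun p : Γ × X => (p.1 * (g p.2)⁻¹, p.2)) ⁻¹' s))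
      = (Equiv.mulRight (g x)⁻¹) ⁻¹' ((fun γ : Γ => (γ, x)) ⁻¹' s) := rfl
  rw [hset]
  exact (count_pres (Equiv.mulRight (g x)⁻¹)).measure_preimage
    (MeasurableSet.of_discrete).nullMeasurableSet

/-- given a probability measure-preserving `Λ`-action on `X` and a
measurable cocycle `α : Λ × X → Γ` with `α(λ,x) = e ↔ λ = e`, the formulas
`γ ∙ (γ̄, x) = (γ γ̄, x)` and `λ ∙ (γ̄, x) = (γ̄ α(λ,x)⁻¹, λ · x)` define commuting
measure-preserving actions of `Γ` and `Λ` on `Ω = Γ × X` with the counting-times-`μ`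
measure, and `{e} × X` is a fundamental domain for the `Γ`-action. -/
theorem cocycle_coupling_construction {Λ Γ X : Type} [Group Λ] [Countable Λ]
    [Group Γ] [Countable Γ] [MeasurableSpace Γ] [DiscreteMeasurableSpace Γ]
    [MeasurableSpace X] (μ : Measure X) [IsProbabilityMeasure μ]
    (act : Λ → X → X)
    (act_one : ∀ x, act 1 x = x)
    (act_mul : ∀ a b x, act (a * b) x = act a (act b x))
    (act_mp : ∀ l, MeasurePreserving (act l) μ μ)
    (α : Λ → X → Γ) (hmeas : ∀ l, Measurable (α l))
    (hcoc : ∀ l l' x, α (l * l') x = α l (act l' x) * α l' x)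
    (hinj : ∀ l x, α l x = 1 ↔ l = 1) :
    -- the two formulas
    ∀ aR : Γ → Γ × X → Γ × X, ∀ aL : Λ → Γ × X → Γ × X,
      (aR = fun γ p => (γ * p.1, p.2)) →
      (aL = fun l p => (p.1 * (α l p.2)⁻¹, act l p.2)) →
      -- define group actions:
      (∀ p, aR 1 p = p) ∧ (∀ γ γ' p, aR (γ * γ') p = aR γ (aR γ' p)) ∧
      (∀ p, aL 1 p = p) ∧ (∀ l l' p, aL (l * l') p = aL l (aL l' p)) ∧
      -- which commute:
      (∀ l γ p, aL l (aR γ p) = aR γ (aL l p)) ∧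
      -- are measure preserving for counting measure times μ:
      (∀ γ, MeasurePreserving (aR γ) (Measure.count.prod μ) (Measure.count.prod μ)) ∧
      (∀ l, MeasurePreserving (aL l) (Measure.count.prod μ) (Measure.count.prod μ)) ∧
      -- and `{e} × X` is a fundamental domain for the `Γ`-action:
      IsFundDom aR (Measure.count.prod μ) ({(1 : Γ)} ×ˢ (Set.univ : Set X)) := by
  
  intro aR aL hR hL
  subst hR hL
  haveI : SigmaFinite (Measure.count : Measure Γ) := count_sigmaFinite
  have hα1 : ∀ x, α 1 x = (1 : Γ) := fun x => (hinj 1 x).mpr rfl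
  refine ⟨?_, ?_, ?_, ?_, ?_, ?_, ?_, ?_, ?_, ?_⟩
  · intro p; simp
  · intro γ γ' p; simp [mul_assoc]
  · intro p; simp [hα1, act_one]
  · intro l l' p
    simp only [hcoc, act_mul, mul_inv_rev, mul_assoc]
  · intro l γ p; simp [mul_assoc]
  · intro γ
    exact (count_pres (Equiv.mulLeft γ)).prod (MeasurePreserving.id μ)
  · intro l
    have h1 := twist_pres μ (α l) (hmeas l)
    have h2 : MeasurePreserving (fun p : Γ × X => (p.1, act l p.2))
        (Measure.count.prod μ) (Measure.count.prod μ) :=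
      (MeasurePreserving.id Measure.count).prod (act_mp l)
    exact h2.comp h1
  · exact ((measurableSet_singleton (1 : Γ)).prod MeasurableSet.univ).nullMeasurableSet
  · exact Filter.Eventually.of_forall fun p => ⟨p.1⁻¹, by simp⟩
  · intro γ₁ γ₂ hne
    refine Disjoint.aedisjoint ?_
    rw [Set.disjoint_left]
    rintro ⟨γ, x⟩ hp1 hp2
    simp only [Set.mem_preimage, Set.mem_prod, Set.mem_singleton_iff, Set.mem_univ,
      and_true] at hp1 hp2
    exact hne (mul_right_cancel (hp1.trans hp2.symm))
end

section
/- Given an SMI-coupling of Λ into Γ with fundamental domains X ⊆ Y and induced cocycle α: Λ × X → Γ, the map α̂: X → [Λ,Γ] defined by α̂(x)(λ) = α(λ,x) is Λ-equivariant with respect to the action (λ·f)(x) = f(xλ)f(λ)⁻¹ on [Λ,Γ], and α̂(x) is injective for almost every x ∈ X. -/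
open MeasureTheory

/-- The natural `Λ`-action on maps `f : Λ → Γ`: `(λ · f)(x) = f(xλ) f(λ)⁻¹`. -/
def ract {Λ Γ : Type*} [Group Λ] [Group Γ] (l : Λ) (f : Λ → Γ) : Λ → Γ :=
  fun x => f (x * l) * (f l)⁻¹

/-- for an SMI-coupling with fundamental domains `X ⊆ Y`, induced action
`dot` on `X` and induced cocycle `α` (characterized by `λ · x = α(λ,x) λ x ∈ X`), the
map `α̂ : X → [Λ,Γ]`, `α̂(x)(λ) = α(λ,x)`, is `Λ`-equivariant for the action
`(λ·f)(x) = f(xλ) f(λ)⁻¹`, and `α̂(x)` is injective for almost every `x ∈ X`. -/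
theorem smi_cocycle_equivariant_injective {Λ Γ Ω : Type} [Group Λ] [Countable Λ]
    [Group Γ] [Countable Γ] [MeasurableSpace Ω] (μ : Measure Ω)
    (c : Coupling Λ Γ Ω μ) (X Y : Set Ω)
    (hX : IsFundDom c.actR μ X) (hY : IsFundDom c.actL μ Y)
    (hXfin : μ X < ⊤) (hXY : X ⊆ Y)
    (dot : Λ → Ω → Ω) (α : Λ → Ω → Γ)
    (hdot : ∀ l : Λ, ∀ᵐ x ∂μ, x ∈ X →
      dot l x = c.actR (α l x) (c.actL l x) ∧ dot l x ∈ X) :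
    (∀ l : Λ, ∀ᵐ x ∂μ, x ∈ X →
        (fun l' : Λ => α l' (dot l x)) = ract l (fun l' : Λ => α l' x)) ∧
    (∀ᵐ x ∂μ, x ∈ X → Function.Injective fun l : Λ => α l x) := by
  classical
  have pull : ∀ {f : Ω → Ω}, MeasurePreserving f μ μ → ∀ {N : Set Ω}, μ N = 0 →
      ∀ᵐ x ∂μ, f x ∉ N := by
    intro f hf N hN
    exact measure_eq_zero_iff_ae_notMem.mp (hf.quasiMeasurePreserving.preimage_null hN)
  have dotpull : ∀ (l : Λ) {N : Set Ω}, μ N = 0 →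
      ∀ᵐ x ∂μ, x ∈ X → dot l x ∉ N := by
    intro l N hN
    have h2 : ∀ᵐ x ∂μ, ∀ g : Γ, c.actR g (c.actL l x) ∉ N := by
      rw [ae_all_iff]
      intro g
      exact pull ((c.mpR g).comp (c.mpL l)) hN
    filter_upwards [hdot l, h2] with x hx1 hx2 hxX
    rw [(hx1 hxX).1]
    exact hx2 _
  constructor
  · intro l
    have key : ∀ l' : Λ, ∀ᵐ x ∂μ, x ∈ X →
        α l' (dot l x) = α (l' * l) x * (α l x)⁻¹ := by
      intro l'
      have hC : ∀ᵐ x ∂μ, x ∈ X → (dot l x ∈ X →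
          dot l' (dot l x) = c.actR (α l' (dot l x)) (c.actL l' (dot l x)) ∧
          dot l' (dot l x) ∈ X) := by
        have hN : μ {z | ¬ (z ∈ X →
            dot l' z = c.actR (α l' z) (c.actL l' z) ∧ dot l' z ∈ X)} = 0 :=
          ae_iff.mp (hdot l')
        filter_upwards [dotpull l hN] with x hx hxX hdx
        have hx2 := hx hxX
        simp only [Set.mem_setOf_eq, not_not] at hx2
        exact hx2 hdx
      have hD : ∀ᵐ x ∂μ, ∀ g₁ g₂ : Γ, g₁ ≠ g₂ →
          ¬ (c.actR g₁ (c.actL (l' * l) x) ∈ X ∧ c.actR g₂ (c.actL (l' * l) x) ∈ X) := by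
        rw [ae_all_iff]
        intro g₁
        rw [ae_all_iff]
        intro g₂
        rcases eq_or_ne g₁ g₂ with h | h
        · filter_upwards with x hne; exact absurd h hne
        · have hnull : μ (c.actR g₁ ⁻¹' X ∩ c.actR g₂ ⁻¹' X) = 0 := hX.2.2 h
          filter_upwards [pull (c.mpL (l' * l)) hnull] with x hx _ hmem
          exact hx ⟨hmem.1, hmem.2⟩
      filter_upwards [hdot l, hdot (l' * l), hC, hD] with x hA hB hC' hD' hxX
      obtain ⟨hA1, hA2⟩ := hA hxX
      obtain ⟨hB1, hB2⟩ := hB hxX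
      obtain ⟨hC1, hC2⟩ := hC' hxX hA2
      have hcomp : c.actL l' (dot l x) = c.actR (α l x) (c.actL (l' * l) x) := by
        rw [hA1, c.comm, ← c.actL_mul]
      have hu1 : dot l' (dot l x) = c.actR (α l' (dot l x) * α l x) (c.actL (l' * l) x) := by
        rw [hC1, hcomp, c.actR_mul]
      rw [hu1] at hC2
      rw [hB1] at hB2
      have hg : α l' (dot l x) * α l x = α (l' * l) x := by
        by_contra hne
        exact hD' _ _ hne ⟨hC2, hB2⟩
      exact eq_mul_inv_of_mul_eq hg
    have h := ae_all_iff.mpr key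
    filter_upwards [h] with x hx hxX
    funext l'
    exact hx l' hxX
  · have key : ∀ l₁ l₂ : Λ, ∀ g : Γ, ∀ᵐ x ∂μ, x ∈ X →
        l₁ ≠ l₂ → ¬ (α l₁ x = g ∧ α l₂ x = g) := by
      intro l₁ l₂ g
      rcases eq_or_ne l₁ l₂ with h | h
      · filter_upwards with x _ hne; exact absurd h hne
      · have hnull : μ (c.actL l₁ ⁻¹' Y ∩ c.actL l₂ ⁻¹' Y) = 0 := hY.2.2 h
        filter_upwards [hdot l₁, hdot l₂, pull (c.mpR g) hnull] with x h1 h2 h3 hxX _ hgg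
        obtain ⟨e1, m1⟩ := h1 hxX
        obtain ⟨e2, m2⟩ := h2 hxX
        rw [e1, hgg.1] at m1
        rw [e2, hgg.2] at m2
        rw [← c.comm] at m1 m2
        exact h3 ⟨hXY m1, hXY m2⟩
    have h := ae_all_iff.mpr fun l₁ => ae_all_iff.mpr fun l₂ =>
      ae_all_iff.mpr fun g => key l₁ l₂ g
    filter_upwards [h] with x hx hxX l₁ l₂ heq
    by_contra hne
    exact hx l₁ l₂ (α l₁ x) hxX hne ⟨rfl, heq.symm⟩
end

section
/- Let GΘ be a graph product over graph Θ with vertex groups A₁,…,Aₙ. Fix a vertex group A_k with vertex v_k, and let L ≤ GΘ be the subgroup generated by the vertex groups of lk(v_k). Then every element g ∈ GΘ can be written g = a·l·h where a ∈ A_k, l ∈ L, and h is either trivial or has a reduced expression beginning with an element of some vertex group A_m whose vertex is not in st(v_k). -/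
open Monoid MeasureTheory

/-- The normal subgroup of the free product `⋆ᵥ A v` generated by the commutators
`[a,b]` with `a ∈ A i`, `b ∈ A j`, for adjacent vertices `i, j` of `Θ`. -/
def graphProductRels {V : Type} (Θ : SimpleGraph V) (A : V → Type) [∀ v, Group (A v)] :
    Subgroup (Monoid.CoprodI A) :=
  Subgroup.normalClosure
    {x | ∃ (i j : V) (a : A i) (b : A j), Θ.Adj i j ∧
      x = Monoid.CoprodI.of a * Monoid.CoprodI.of b *
            (Monoid.CoprodI.of a)⁻¹ * (Monoid.CoprodI.of b)⁻¹}

instance graphProductRels_normal {V : Type} (Θ : SimpleGraph V) (A : V → Type)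
    [∀ v, Group (A v)] : (graphProductRels Θ A).Normal :=
  Subgroup.normalClosure_normal

/-- The graph product of the groups `A v` over the graph `Θ`: the quotient of the free
product by the relations making vertex groups of adjacent vertices commute. -/
def GraphProduct {V : Type} (Θ : SimpleGraph V) (A : V → Type) [∀ v, Group (A v)] :
    Type :=
  Monoid.CoprodI A ⧸ graphProductRels Θ A

instance {V : Type} (Θ : SimpleGraph V) (A : V → Type) [∀ v, Group (A v)] :
    Group (GraphProduct Θ A) :=
  inferInstanceAs (Group (Monoid.CoprodI A ⧸ graphProductRels Θ A))

/-- The canonical homomorphism from a vertex group into the graph product. -/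
def gpOf {V : Type} (Θ : SimpleGraph V) (A : V → Type) [∀ v, Group (A v)] (v : V) :
    A v →* GraphProduct Θ A :=
  (QuotientGroup.mk' (graphProductRels Θ A)).comp Monoid.CoprodI.of

/-- An element of a graph product is a syllable if it lies in (the image of) one of
the vertex groups. -/
def IsSyllable {V : Type} (Θ : SimpleGraph V) (A : V → Type) [∀ v, Group (A v)]
    (x : GraphProduct Θ A) : Prop :=
  ∃ (v : V) (a : A v), x = gpOf Θ A v a

/-- The syllable length of an element of a graph product: the least number of
syllables needed to write it. -/
noncomputable def sylLength {V : Type} (Θ : SimpleGraph V) (A : V → Type)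
    [∀ v, Group (A v)] (g : GraphProduct Θ A) : ℕ :=
  sInf {n | ∃ L : List (GraphProduct Θ A),
    (∀ x ∈ L, IsSyllable Θ A x) ∧ L.prod = g ∧ L.length = n}

/-- The subgroup of the graph product generated by the vertex groups of the link of
`v`. -/
def linkSubgroup {V : Type} (Θ : SimpleGraph V) (A : V → Type) [∀ v, Group (A v)]
    (v : V) : Subgroup (GraphProduct Θ A) :=
  Subgroup.closure (⋃ u ∈ Θ.neighborSet v, Set.range (gpOf Θ A u))

section Aux
variable {V : Type} (Θ : SimpleGraph V) (A : V → Type) [∀ v, Group (A v)]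

lemma gp_comm {i j : V} (h : Θ.Adj i j) (a : A i) (b : A j) :
    Commute (gpOf Θ A i a) (gpOf Θ A j b) := by
  rw [← commutatorElement_eq_one_iff_commute]
  have hmem : (Monoid.CoprodI.of a * Monoid.CoprodI.of b *
      (Monoid.CoprodI.of a)⁻¹ * (Monoid.CoprodI.of b)⁻¹) ∈ graphProductRels Θ A :=
    Subgroup.subset_normalClosure ⟨i, j, a, b, h, rfl⟩
  have h1 : (QuotientGroup.mk' (graphProductRels Θ A)) (Monoid.CoprodI.of a *
      Monoid.CoprodI.of b * (Monoid.CoprodI.of a)⁻¹ * (Monoid.CoprodI.of b)⁻¹) = 1 := by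
    rw [QuotientGroup.mk'_apply, QuotientGroup.eq_one_iff]; exact hmem
  rw [map_mul, map_mul, map_mul, map_inv, map_inv] at h1; exact h1

lemma exists_decomp (g : GraphProduct Θ A) :
    ∃ L : List (GraphProduct Θ A), (∀ x ∈ L, IsSyllable Θ A x) ∧ L.prod = g := by
  induction g using QuotientGroup.induction_on with
  | H w =>
    induction w using Monoid.CoprodI.induction_on with
    | one => exact ⟨[], by simp, by simp; rfl⟩
    | of i a => exact ⟨[gpOf Θ A i a], by simp [IsSyllable]; exact ⟨i, a, rfl⟩, by
        simp [gpOf]; rfl⟩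
    | mul x y hx hy =>
      obtain ⟨L1, hL1, hp1⟩ := hx
      obtain ⟨L2, hL2, hp2⟩ := hy
      refine ⟨L1 ++ L2, ?_, ?_⟩
      · intro z hz; rcases List.mem_append.mp hz with h | h
        · exact hL1 z h
        · exact hL2 z h
      · rw [List.prod_append, hp1, hp2]; rfl

lemma decomp_set_nonempty (g : GraphProduct Θ A) :
    {n | ∃ L : List (GraphProduct Θ A),
      (∀ x ∈ L, IsSyllable Θ A x) ∧ L.prod = g ∧ L.length = n}.Nonempty := by
  obtain ⟨L, h1, h2⟩ := exists_decomp Θ A g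
  exact ⟨L.length, L, h1, h2, rfl⟩

lemma exists_min_decomp (g : GraphProduct Θ A) :
    ∃ L : List (GraphProduct Θ A), (∀ x ∈ L, IsSyllable Θ A x) ∧ L.prod = g ∧
      L.length = sylLength Θ A g :=
  Nat.sInf_mem (decomp_set_nonempty Θ A g)

lemma min_decomp_ne_one {g : GraphProduct Θ A} {L : List (GraphProduct Θ A)}
    (hsyl : ∀ x ∈ L, IsSyllable Θ A x) (hprod : L.prod = g)
    (hlen : L.length = sylLength Θ A g) : ∀ x ∈ L, x ≠ 1 := by
  intro x hx hx1
  obtain ⟨s, t, rfl⟩ := List.append_of_mem hx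
  have hle : sylLength Θ A g ≤ (s ++ t).length := by
    apply Nat.sInf_le
    refine ⟨s ++ t, ?_, ?_, rfl⟩
    · intro z hz; rcases List.mem_append.mp hz with h | h
      · exact hsyl z (by simp [h])
      · exact hsyl z (by simp [h])
    · rw [← hprod]; simp [hx1]
  simp only [List.length_append, List.length_cons] at hlen hle
  omega
end Aux

section Main
variable {V : Type} (Θ : SimpleGraph V) (A : V → Type) [∀ v, Group (A v)]

lemma main_aux (k : V) : ∀ (n : ℕ) (g : GraphProduct Θ A), sylLength Θ A g ≤ n →
    ∃ (a : A k) (l h : GraphProduct Θ A),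
      g = gpOf Θ A k a * l * h ∧
      l ∈ linkSubgroup Θ A k ∧
      (h = 1 ∨ ∃ (L : List (GraphProduct Θ A)) (m : V) (b : A m),
        m ≠ k ∧ ¬ Θ.Adj k m ∧ b ≠ 1 ∧
        (∀ x ∈ L, IsSyllable Θ A x ∧ x ≠ 1) ∧ L.prod = h ∧
        L.length = sylLength Θ A h ∧
        L.head? = some (gpOf Θ A m b)) := by
  intro n
  induction n with
  | zero =>
    intro g hg
    obtain ⟨L, hsyl, hprod, hlen⟩ := exists_min_decomp Θ A g
    have : L = [] := List.length_eq_zero_iff.mp (by omega)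
    subst this
    refine ⟨1, 1, 1, by simp [← hprod], one_mem _, Or.inl rfl⟩
  | succ n ih =>
    intro g hg
    obtain ⟨L, hsyl, hprod, hlen⟩ := exists_min_decomp Θ A g
    have hne1 := min_decomp_ne_one Θ A hsyl hprod hlen
    match L, hsyl, hprod, hlen, hne1 with
    | [], _, hprod, _, _ =>
      exact ⟨1, 1, 1, by simp [← hprod], one_mem _, Or.inl rfl⟩
    | x :: rest, hsyl, hprod, hlen, hne1 =>
      obtain ⟨m, b, hx⟩ := hsyl x (by simp)
      have hb : b ≠ 1 := by
        rintro rfl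
        exact hne1 x (by simp) (by simp [hx])
      have hrest_syl : ∀ z ∈ rest, IsSyllable Θ A z := fun z hz => hsyl z (by simp [hz])
      have hrest_len : sylLength Θ A rest.prod ≤ n := by
        have h1 : sylLength Θ A rest.prod ≤ rest.length :=
          Nat.sInf_le ⟨rest, hrest_syl, rfl, rfl⟩
        simp only [List.length_cons] at hlen
        omega
      by_cases hmk : m = k
      · subst hmk
        obtain ⟨a', l, h, heq, hl, hh⟩ := ih rest.prod hrest_len
        refine ⟨b * a', l, h, ?_, hl, hh⟩
        rw [← hprod, List.prod_cons, heq, hx, map_mul, mul_assoc, mul_assoc, mul_assoc]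
      · by_cases hadj : Θ.Adj k m
        · obtain ⟨a', l, h, heq, hl, hh⟩ := ih rest.prod hrest_len
          have hxl : x ∈ linkSubgroup Θ A k := by
            apply Subgroup.subset_closure
            exact Set.mem_biUnion hadj ⟨b, hx.symm⟩
          refine ⟨a', x * l, h, ?_, mul_mem hxl hl, hh⟩
          rw [← hprod, List.prod_cons, heq, hx]
          rw [← mul_assoc, ← mul_assoc, ← (gp_comm Θ A hadj a' b).eq]
          simp [mul_assoc]
        · refine ⟨1, 1, g, by simp, one_mem _, Or.inr ?_⟩
          refine ⟨x :: rest, m, b, hmk, hadj, hb, ?_, hprod, hlen, by rw [hx]; rfl⟩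
          intro z hz; exact ⟨hsyl z hz, hne1 z hz⟩
end Main

/-- in a graph product `GΘ`, fixing a vertex `k`, every element `g` can
be written `g = a · l · h` with `a ∈ A k`, `l` in the subgroup generated by the vertex
groups of `lk(k)`, and `h` either trivial or admitting a reduced expression (a
syllable decomposition of minimal length, with all syllables nontrivial) whose first
syllable belongs to a vertex group `A m` with `m ∉ st(k)`. -/
theorem graph_product_decomposition {V : Type} [Fintype V] [DecidableEq V]
    (Θ : SimpleGraph V) (A : V → Type) [∀ v, Group (A v)]
    (k : V) (g : GraphProduct Θ A) :
    ∃ (a : A k) (l h : GraphProduct Θ A),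
      g = gpOf Θ A k a * l * h ∧
      l ∈ linkSubgroup Θ A k ∧
      (h = 1 ∨ ∃ (L : List (GraphProduct Θ A)) (m : V) (b : A m),
        m ≠ k ∧ ¬ Θ.Adj k m ∧ b ≠ 1 ∧
        (∀ x ∈ L, IsSyllable Θ A x ∧ x ≠ 1) ∧ L.prod = h ∧
        L.length = sylLength Θ A h ∧
        L.head? = some (gpOf Θ A m b)) := by
  exact main_aux Θ A k (sylLength Θ A g) g le_rfl
end

section
/- Let GΘ be a graph product over a finite simple graph Θ, fix a vertex v with vertex group Γ = G_v, and let W ⊆ GΘ be the set consisting of e together with all elements not expressible as a nontrivial reduced word ending with an element of Γ. If Θ is irreducible (and has more than one vertex), then the subgroup G_{lk(v)} generated by the link of v acts on W by right multiplication, and W properly contains G_{lk(v)}; in particular a fundamental domain W̃ for this action contains a non-identity element. -/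
open Monoid MeasureTheory

/-- `w` is equal to a nontrivial reduced word (minimal-length syllable decomposition
with nontrivial syllables) ending with a nontrivial element of the vertex group
`A v`. -/
def EndsInVertex {V : Type} (Θ : SimpleGraph V) (A : V → Type) [∀ v, Group (A v)]
    (v : V) (w : GraphProduct Θ A) : Prop :=
  ∃ (L : List (GraphProduct Θ A)) (b : A v), L ≠ [] ∧ b ≠ 1 ∧
    (∀ x ∈ L, IsSyllable Θ A x ∧ x ≠ 1) ∧ L.prod = w ∧
    L.length = sylLength Θ A w ∧ L.getLast? = some (gpOf Θ A v b)

/-- The set `W` of minimal-length coset representatives for `GΘ/Γ`, `Γ = A v`: the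
identity together with all elements not expressible as a nontrivial reduced word
ending with an element of `A v`. -/
def minimalReps {V : Type} (Θ : SimpleGraph V) (A : V → Type) [∀ v, Group (A v)]
    (v : V) : Set (GraphProduct Θ A) :=
  {w | w = 1 ∨ ¬ EndsInVertex Θ A v w}

/-- A graph is irreducible if it is not the join of two nonempty full subgraphs. -/
def GraphIrreducible {V : Type} (Θ : SimpleGraph V) : Prop :=
  ¬ ∃ S : Set V, S.Nonempty ∧ Sᶜ.Nonempty ∧ ∀ a ∈ S, ∀ b ∈ Sᶜ, Θ.Adj a b

namespace GPNF
set_option linter.unusedSectionVars false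

open Monoid

variable {V : Type} [DecidableEq V] (Θ : SimpleGraph V) (A : V → Type) [∀ v, Group (A v)]

abbrev Ltr (A : V → Type) : Type := (w : V) × A w

def prodW (L : List (Ltr A)) : GraphProduct Θ A :=
  (L.map fun ℓ => gpOf Θ A ℓ.1 ℓ.2).prod

@[simp] lemma prodW_nil : prodW Θ A ([] : List (Ltr A)) = 1 := rfl

@[simp] lemma prodW_cons (ℓ : Ltr A) (L : List (Ltr A)) :
    prodW Θ A (ℓ :: L) = gpOf Θ A ℓ.1 ℓ.2 * prodW Θ A L := by
  simp [prodW]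

lemma prodW_append (L M : List (Ltr A)) :
    prodW Θ A (L ++ M) = prodW Θ A L * prodW Θ A M := by
  simp [prodW]

lemma gp_comm {i j : V} (h : Θ.Adj i j) (a : A i) (b : A j) :
    gpOf Θ A i a * gpOf Θ A j b = gpOf Θ A j b * gpOf Θ A i a := by
  have h1 : (QuotientGroup.mk' (graphProductRels Θ A))
      (Monoid.CoprodI.of a * Monoid.CoprodI.of b * (Monoid.CoprodI.of a)⁻¹ *
        (Monoid.CoprodI.of b)⁻¹) = 1 := by
    rw [QuotientGroup.mk'_apply, QuotientGroup.eq_one_iff]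
    exact Subgroup.subset_normalClosure ⟨i, j, a, b, h, rfl⟩
  rw [← commutatorElement_eq_one_iff_mul_comm]
  rw [commutatorElement_def]
  change (QuotientGroup.mk' (graphProductRels Θ A)) (Monoid.CoprodI.of a) *
      (QuotientGroup.mk' (graphProductRels Θ A)) (Monoid.CoprodI.of b) *
      ((QuotientGroup.mk' (graphProductRels Θ A)) (Monoid.CoprodI.of a))⁻¹ *
      ((QuotientGroup.mk' (graphProductRels Θ A)) (Monoid.CoprodI.of b))⁻¹ = 1
  rw [← map_inv (QuotientGroup.mk' (graphProductRels Θ A)),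
    ← map_inv (QuotientGroup.mk' (graphProductRels Θ A)),
    ← map_mul (QuotientGroup.mk' (graphProductRels Θ A)),
    ← map_mul (QuotientGroup.mk' (graphProductRels Θ A)),
    ← map_mul (QuotientGroup.mk' (graphProductRels Θ A))]
  exact h1

open Classical in
noncomputable def initL (u : V) : List (Ltr A) → Option (A u)
  | [] => none
  | ⟨w, b⟩ :: ys => if h : w = u then some (h ▸ b)
      else if Θ.Adj w u then initL u ys else none

noncomputable def Reduced : List (Ltr A) → Prop
  | [] => True
  | ⟨w, b⟩ :: ys => b ≠ 1 ∧ initL Θ A w ys = none ∧ Reduced ys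

open Classical in
noncomputable def act (u : V) (a : A u) : List (Ltr A) → List (Ltr A)
  | [] => if a = 1 then [] else [⟨u, a⟩]
  | ⟨w, b⟩ :: ys =>
    if h : w = u then
      (if a * (h ▸ b) = 1 then ys else ⟨u, a * (h ▸ b)⟩ :: ys)
    else if Θ.Adj w u then ⟨w, b⟩ :: act u a ys
    else if a = 1 then ⟨w, b⟩ :: ys else ⟨u, a⟩ :: ⟨w, b⟩ :: ys

variable {Θ A}

@[simp] lemma initL_nil (u : V) : initL Θ A u [] = none := rfl

@[simp] lemma initL_cons_self (u : V) (b : A u) (ys : List (Ltr A)) :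
    initL Θ A u (⟨u, b⟩ :: ys) = some b := by
  simp [initL]

lemma initL_cons_adj {u w : V} (h : Θ.Adj w u) (b : A w) (ys : List (Ltr A)) :
    initL Θ A u (⟨w, b⟩ :: ys) = initL Θ A u ys := by
  rw [initL, dif_neg h.ne, if_pos h]

lemma initL_cons_else {u w : V} (h1 : w ≠ u) (h2 : ¬ Θ.Adj w u) (b : A w)
    (ys : List (Ltr A)) : initL Θ A u (⟨w, b⟩ :: ys) = none := by
  rw [initL, dif_neg h1, if_neg h2]

@[simp] lemma Reduced_nil : Reduced Θ A [] := trivial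

lemma Reduced_cons {w : V} {b : A w} {ys : List (Ltr A)} :
    Reduced Θ A (⟨w, b⟩ :: ys) ↔ b ≠ 1 ∧ initL Θ A w ys = none ∧ Reduced Θ A ys :=
  Iff.rfl

@[simp] lemma act_nil_one (u : V) : act Θ A u (1 : A u) [] = [] := by simp [act]

lemma act_nil {u : V} {a : A u} (ha : a ≠ 1) : act Θ A u a [] = [⟨u, a⟩] := by
  simp [act, ha]

lemma act_cons_cancel {u : V} {a b : A u} (hab : a * b = 1) (ys : List (Ltr A)) :
    act Θ A u a (⟨u, b⟩ :: ys) = ys := by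
  rw [act, dif_pos rfl, if_pos]; exact hab

lemma act_cons_merge {u : V} {a b : A u} (hab : a * b ≠ 1) (ys : List (Ltr A)) :
    act Θ A u a (⟨u, b⟩ :: ys) = ⟨u, a * b⟩ :: ys := by
  rw [act, dif_pos rfl, if_neg]; exact hab

lemma act_cons_adj {u w : V} {a : A u} (h : Θ.Adj w u) (b : A w) (ys : List (Ltr A)) :
    act Θ A u a (⟨w, b⟩ :: ys) = ⟨w, b⟩ :: act Θ A u a ys := by
  rw [act, dif_neg h.ne, if_pos h]

lemma act_cons_else {u w : V} {a : A u} (h1 : w ≠ u) (h2 : ¬ Θ.Adj w u) (ha : a ≠ 1)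
    (b : A w) (ys : List (Ltr A)) :
    act Θ A u a (⟨w, b⟩ :: ys) = ⟨u, a⟩ :: ⟨w, b⟩ :: ys := by
  rw [act, dif_neg h1, if_neg h2, if_neg ha]

lemma act_cons_else_one {u w : V} (h1 : w ≠ u) (h2 : ¬ Θ.Adj w u)
    (b : A w) (ys : List (Ltr A)) :
    act Θ A u (1 : A u) (⟨w, b⟩ :: ys) = ⟨w, b⟩ :: ys := by
  rw [act, dif_neg h1, if_neg h2, if_pos rfl]

variable (Θ A) in
inductive Swap : List (Ltr A) → List (Ltr A) → Prop
  | head (x y : Ltr A) (S : List (Ltr A)) (h : Θ.Adj x.1 y.1) :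
      Swap (x :: y :: S) (y :: x :: S)
  | cons (z : Ltr A) {L L' : List (Ltr A)} : Swap L L' → Swap (z :: L) (z :: L')

variable (Θ A) in
def Rel : List (Ltr A) → List (Ltr A) → Prop := Relation.ReflTransGen (Swap Θ A)

lemma Rel.rfl {L : List (Ltr A)} : Rel Θ A L L := Relation.ReflTransGen.refl

lemma Swap.rel {L L' : List (Ltr A)} (h : Swap Θ A L L') : Rel Θ A L L' :=
  Relation.ReflTransGen.single h

lemma Rel.trans {L M N : List (Ltr A)} (h : Rel Θ A L M) (h' : Rel Θ A M N) :
    Rel Θ A L N := Relation.ReflTransGen.trans h h'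

lemma Swap.symm {L L' : List (Ltr A)} (h : Swap Θ A L L') : Swap Θ A L' L := by
  induction h with
  | head x y S h => exact Swap.head y x S h.symm
  | cons z _ ih => exact Swap.cons z ih

lemma Rel.symm {L L' : List (Ltr A)} (h : Rel Θ A L L') : Rel Θ A L' L := by
  induction h with
  | refl => exact Rel.rfl
  | tail _ h2 ih => exact (h2.symm.rel).trans ih

lemma Rel.cons {L L' : List (Ltr A)} (z : Ltr A) (h : Rel Θ A L L') :
    Rel Θ A (z :: L) (z :: L') :=
  Relation.ReflTransGen.lift (z :: ·) (fun _ _ hs => Swap.cons z hs) _ _ h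

lemma Swap.prodW {L L' : List (Ltr A)} (h : Swap Θ A L L') :
    prodW Θ A L = prodW Θ A L' := by
  induction h with
  | head x y S h => simp [← mul_assoc, gp_comm Θ A h]
  | cons z _ ih => simp [ih]

lemma Rel.prodW {L L' : List (Ltr A)} (h : Rel Θ A L L') :
    prodW Θ A L = prodW Θ A L' := by
  induction h with
  | refl => rfl
  | tail _ h2 ih => exact ih.trans h2.prodW

lemma Swap.length {L L' : List (Ltr A)} (h : Swap Θ A L L') :
    L.length = L'.length := by
  induction h with
  | head x y S h => rfl
  | cons z _ ih => simp [ih]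

lemma Rel.length {L L' : List (Ltr A)} (h : Rel Θ A L L') :
    L.length = L'.length := by
  induction h with
  | refl => rfl
  | tail _ h2 ih => exact ih.trans h2.length

lemma Swap.initL {L L' : List (Ltr A)} (u : V) (h : Swap Θ A L L') :
    initL Θ A u L = initL Θ A u L' := by
  induction h with
  | head x y S h =>
    rcases x with ⟨w1, b1⟩; rcases y with ⟨w2, b2⟩
    dsimp at h
    by_cases h1 : w1 = u
    · subst h1
      rw [initL_cons_self, initL_cons_adj h.symm, initL_cons_self]
    · by_cases h2 : w2 = u
      · subst h2
        rw [initL_cons_adj h, initL_cons_self, initL_cons_self]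
      · by_cases hA1 : Θ.Adj w1 u
        · by_cases hA2 : Θ.Adj w2 u
          · rw [initL_cons_adj hA1, initL_cons_adj hA2, initL_cons_adj hA2,
              initL_cons_adj hA1]
          · rw [initL_cons_adj hA1, initL_cons_else h2 hA2, initL_cons_else h2 hA2]
        · by_cases hA2 : Θ.Adj w2 u
          · rw [initL_cons_else h1 hA1, initL_cons_adj hA2, initL_cons_else h1 hA1]
          · rw [initL_cons_else h1 hA1, initL_cons_else h2 hA2]
  | cons z L ih =>
    rcases z with ⟨w, b⟩
    by_cases h1 : w = u
    · subst h1; rw [initL_cons_self, initL_cons_self]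
    · by_cases hA : Θ.Adj w u
      · rw [initL_cons_adj hA, initL_cons_adj hA, ih]
      · rw [initL_cons_else h1 hA, initL_cons_else h1 hA]

lemma Rel.initL {L L' : List (Ltr A)} (u : V) (h : Rel Θ A L L') :
    initL Θ A u L = initL Θ A u L' := by
  induction h with
  | refl => rfl
  | tail _ h2 ih => exact ih.trans (h2.initL u)

lemma Swap.reduced {L L' : List (Ltr A)} (h : Swap Θ A L L') (hr : Reduced Θ A L) :
    Reduced Θ A L' := by
  induction h with
  | head x y S h =>
    rcases x with ⟨w1, b1⟩; rcases y with ⟨w2, b2⟩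
    dsimp at h
    rw [Reduced_cons] at hr ⊢
    obtain ⟨hb1, hi1, hr⟩ := hr
    rw [Reduced_cons] at hr
    obtain ⟨hb2, hi2, hr⟩ := hr
    rw [initL_cons_adj h.symm] at hi1
    refine ⟨hb2, ?_, ?_⟩
    · rw [initL_cons_adj h]; exact hi2
    · exact Reduced_cons.mpr ⟨hb1, hi1, hr⟩
  | cons z L ih =>
    rcases z with ⟨w, b⟩
    rw [Reduced_cons] at hr ⊢
    exact ⟨hr.1, (L.initL w).symm.trans hr.2.1, ih hr.2.2⟩

lemma Rel.reduced {L L' : List (Ltr A)} (h : Rel Θ A L L') (hr : Reduced Θ A L) :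
    Reduced Θ A L' := by
  induction h with
  | refl => exact hr
  | tail _ h2 ih => exact h2.reduced ih

lemma prodW_act (u : V) (a : A u) (L : List (Ltr A)) :
    prodW Θ A (act Θ A u a L) = gpOf Θ A u a * prodW Θ A L := by
  induction L with
  | nil =>
    by_cases ha : a = 1
    · subst ha; simp
    · rw [act_nil ha]; simp
  | cons y ys ih =>
    rcases y with ⟨w, b⟩
    by_cases h1 : w = u
    · subst h1
      by_cases hab : a * b = 1
      · rw [act_cons_cancel hab]
        have : gpOf Θ A w a * gpOf Θ A w b = 1 := by
          rw [← map_mul, hab, map_one]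
        rw [prodW_cons]; dsimp
        rw [← mul_assoc, this, one_mul]
      · rw [act_cons_merge hab, prodW_cons, prodW_cons]; dsimp
        rw [map_mul, mul_assoc]
    · by_cases hA : Θ.Adj w u
      · rw [act_cons_adj hA, prodW_cons, prodW_cons, ih]; dsimp
        rw [← mul_assoc, ← mul_assoc, gp_comm Θ A hA]
      · by_cases ha : a = 1
        · subst ha; rw [act_cons_else_one h1 hA]; simp
        · rw [act_cons_else h1 hA ha, prodW_cons, prodW_cons]

lemma length_act_le (u : V) (a : A u) (L : List (Ltr A)) :
    (act Θ A u a L).length ≤ L.length + 1 := by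
  induction L with
  | nil =>
    by_cases ha : a = 1
    · subst ha; simp
    · rw [act_nil ha]; simp
  | cons y ys ih =>
    rcases y with ⟨w, b⟩
    by_cases h1 : w = u
    · subst h1
      by_cases hab : a * b = 1
      · rw [act_cons_cancel hab]; simp; omega
      · rw [act_cons_merge hab]; simp
    · by_cases hA : Θ.Adj w u
      · rw [act_cons_adj hA]; simpa using ih
      · by_cases ha : a = 1
        · subst ha; rw [act_cons_else_one h1 hA]; simp
        · rw [act_cons_else h1 hA ha]; simp

lemma length_act_exposed (u : V) (a : A u) {L : List (Ltr A)}
    (h : initL Θ A u L ≠ none) : (act Θ A u a L).length ≤ L.length := by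
  induction L with
  | nil => simp at h
  | cons y ys ih =>
    rcases y with ⟨w, b⟩
    by_cases h1 : w = u
    · subst h1
      by_cases hab : a * b = 1
      · rw [act_cons_cancel hab]; simp
      · rw [act_cons_merge hab]; simp
    · by_cases hA : Θ.Adj w u
      · rw [initL_cons_adj hA] at h
        rw [act_cons_adj hA]; simpa using ih h
      · rw [initL_cons_else h1 hA] at h; exact absurd rfl h

lemma initL_act_adj {u v' : V} (h : Θ.Adj u v') (a : A u) (L : List (Ltr A)) :
    initL Θ A v' (act Θ A u a L) = initL Θ A v' L := by
  induction L with
  | nil =>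
    by_cases ha : a = 1
    · subst ha; simp
    · rw [act_nil ha, initL_cons_adj h]
  | cons y ys ih =>
    rcases y with ⟨w, b⟩
    by_cases h1 : w = u
    · subst h1
      by_cases hab : a * b = 1
      · rw [act_cons_cancel hab, initL_cons_adj h]
      · rw [act_cons_merge hab, initL_cons_adj h, initL_cons_adj h]
    · by_cases hA : Θ.Adj w u
      · rw [act_cons_adj hA]
        by_cases h2 : w = v'
        · subst h2; rw [initL_cons_self, initL_cons_self]
        · by_cases hA2 : Θ.Adj w v'
          · rw [initL_cons_adj hA2, initL_cons_adj hA2, ih]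
          · rw [initL_cons_else h2 hA2, initL_cons_else h2 hA2]
      · by_cases ha : a = 1
        · subst ha; rw [act_cons_else_one h1 hA]
        · rw [act_cons_else h1 hA ha, initL_cons_adj h]

lemma act_one {L : List (Ltr A)} (u : V) (hL : ∀ ℓ ∈ L, ℓ.2 ≠ (1 : A ℓ.1)) :
    act Θ A u (1 : A u) L = L := by
  induction L with
  | nil => simp
  | cons y ys ih =>
    rcases y with ⟨w, b⟩
    have hb : b ≠ 1 := hL ⟨w, b⟩ (List.mem_cons_self)
    by_cases h1 : w = u
    · subst h1
      have : (1 : A w) * b ≠ 1 := by simpa using hb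
      rw [act_cons_merge this, one_mul]
    · by_cases hA : Θ.Adj w u
      · rw [act_cons_adj hA, ih (fun ℓ hm => hL ℓ (List.mem_cons_of_mem _ hm))]
      · rw [act_cons_else_one h1 hA]

lemma reduced_letters {L : List (Ltr A)} (hr : Reduced Θ A L) :
    ∀ ℓ ∈ L, ℓ.2 ≠ (1 : A ℓ.1) := by
  induction L with
  | nil => simp
  | cons y ys ih =>
    rcases y with ⟨w, b⟩
    rw [Reduced_cons] at hr
    intro ℓ hm
    rcases List.mem_cons.mp hm with h | h
    · subst h; exact hr.1
    · exact ih hr.2.2 ℓ h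

lemma reduced_act {L : List (Ltr A)} (u : V) (a : A u) (hr : Reduced Θ A L) :
    Reduced Θ A (act Θ A u a L) := by
  induction L with
  | nil =>
    by_cases ha : a = 1
    · subst ha; simp
    · rw [act_nil ha]; exact Reduced_cons.mpr ⟨ha, rfl, trivial⟩
  | cons y ys ih =>
    rcases y with ⟨w, b⟩
    rw [Reduced_cons] at hr
    obtain ⟨hb, hin, hrys⟩ := hr
    by_cases h1 : w = u
    · subst h1
      by_cases hab : a * b = 1
      · rw [act_cons_cancel hab]; exact hrys
      · rw [act_cons_merge hab]; exact Reduced_cons.mpr ⟨hab, hin, hrys⟩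
    · by_cases hA : Θ.Adj w u
      · rw [act_cons_adj hA]
        refine Reduced_cons.mpr ⟨hb, ?_, ih hrys⟩
        rw [initL_act_adj hA.symm]; exact hin
      · by_cases ha : a = 1
        · subst ha; rw [act_cons_else_one h1 hA]
          exact Reduced_cons.mpr ⟨hb, hin, hrys⟩
        · rw [act_cons_else h1 hA ha]
          refine Reduced_cons.mpr ⟨ha, ?_, Reduced_cons.mpr ⟨hb, hin, hrys⟩⟩
          rw [initL_cons_else h1 hA]

lemma insert_front {L : List (Ltr A)} {u : V} {a : A u} (ha : a ≠ 1)
    (h : initL Θ A u L = none) : Rel Θ A (act Θ A u a L) (⟨u, a⟩ :: L) := by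
  induction L with
  | nil => rw [act_nil ha]; exact Rel.rfl
  | cons y ys ih =>
    rcases y with ⟨w, b⟩
    by_cases h1 : w = u
    · subst h1; rw [initL_cons_self] at h; exact absurd h (by simp)
    · by_cases hA : Θ.Adj w u
      · rw [initL_cons_adj hA] at h
        rw [act_cons_adj hA]
        exact ((ih h).cons _).trans (Swap.head ⟨w, b⟩ ⟨u, a⟩ ys hA).rel
      · rw [act_cons_else h1 hA ha]; exact Rel.rfl

lemma act_mul {L : List (Ltr A)} (u : V) (a b : A u) (hr : Reduced Θ A L) :
    Rel Θ A (act Θ A u (a * b) L) (act Θ A u a (act Θ A u b L)) := by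
  induction L with
  | nil =>
    by_cases hb : b = 1
    · subst hb; rw [mul_one, act_nil_one]; exact Rel.rfl
    · rw [act_nil hb]
      by_cases hab : a * b = 1
      · rw [act_cons_cancel hab, hab, act_nil_one]; exact Rel.rfl
      · rw [act_cons_merge hab, act_nil hab]; exact Rel.rfl
  | cons y ys ih =>
    rcases y with ⟨w, c⟩
    rw [Reduced_cons] at hr
    obtain ⟨hc, hin, hrys⟩ := hr
    by_cases h1 : w = u
    · subst h1
      by_cases hbc : b * c = 1
      · rw [act_cons_cancel hbc]
        by_cases habc : a * b * c = 1
        · have ha : a = 1 := by rwa [mul_assoc, hbc, mul_one] at habc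
          rw [act_cons_cancel habc, ha, act_one w (reduced_letters hrys)]
          exact Rel.rfl
        · have ha : a ≠ 1 := by rwa [mul_assoc, hbc, mul_one] at habc
          have he : a * b * c = a := by rw [mul_assoc, hbc, mul_one]
          rw [act_cons_merge habc, he]
          exact (insert_front ha hin).symm
      · rw [act_cons_merge hbc]
        by_cases habc : a * b * c = 1
        · rw [act_cons_cancel habc, act_cons_cancel (by rw [← mul_assoc]; exact habc)]
          exact Rel.rfl
        · rw [act_cons_merge habc,
            act_cons_merge (fun hh => habc (by rw [mul_assoc]; exact hh)), mul_assoc]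
          exact Rel.rfl
    · by_cases hA : Θ.Adj w u
      · rw [act_cons_adj hA, act_cons_adj hA, act_cons_adj hA]
        exact (ih hrys).cons _
      · by_cases hb : b = 1
        · subst hb; rw [mul_one, act_cons_else_one h1 hA]; exact Rel.rfl
        · rw [act_cons_else h1 hA hb]
          by_cases hab : a * b = 1
          · rw [act_cons_cancel hab, hab,
              act_one u (reduced_letters (Reduced_cons.mpr ⟨hc, hin, hrys⟩))]
            exact Rel.rfl
          · rw [act_cons_merge hab, act_cons_else h1 hA hab]
            exact Rel.rfl

lemma Swap.act {L L' : List (Ltr A)} (u : V) (a : A u) (h : Swap Θ A L L') :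
    Rel Θ A (act Θ A u a L) (act Θ A u a L') := by
  induction h with
  | head x y S h =>
    rcases x with ⟨w1, b1⟩; rcases y with ⟨w2, b2⟩
    dsimp at h
    by_cases h1 : w1 = u
    · subst h1
      rw [act_cons_adj h.symm]
      by_cases hc : a * b1 = 1
      · rw [act_cons_cancel hc, act_cons_cancel hc]; exact Rel.rfl
      · rw [act_cons_merge hc, act_cons_merge hc]
        exact (Swap.head ⟨w1, a * b1⟩ ⟨w2, b2⟩ S h).rel
    · by_cases h2 : w2 = u
      · subst h2
        rw [act_cons_adj h]
        by_cases hc : a * b2 = 1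
        · rw [act_cons_cancel hc, act_cons_cancel hc]; exact Rel.rfl
        · rw [act_cons_merge hc, act_cons_merge hc]
          exact (Swap.head ⟨w1, b1⟩ ⟨w2, a * b2⟩ S h).rel
      · by_cases hA1 : Θ.Adj w1 u
        · by_cases hA2 : Θ.Adj w2 u
          · rw [act_cons_adj hA1, act_cons_adj hA2, act_cons_adj hA2, act_cons_adj hA1]
            exact (Swap.head ⟨w1, b1⟩ ⟨w2, b2⟩ _ h).rel
          · by_cases ha : a = 1
            · subst ha
              rw [act_cons_adj hA1, act_cons_else_one h2 hA2, act_cons_else_one h2 hA2]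
              exact (Swap.head ⟨w1, b1⟩ ⟨w2, b2⟩ _ h).rel
            · rw [act_cons_adj hA1, act_cons_else h2 hA2 ha, act_cons_else h2 hA2 ha]
              refine ((Swap.head ⟨w1, b1⟩ ⟨u, a⟩ _ hA1).rel).trans ?_
              exact ((Swap.head ⟨w1, b1⟩ ⟨w2, b2⟩ _ h).rel).cons _
        · by_cases ha : a = 1
          · subst ha
            by_cases hA2 : Θ.Adj w2 u
            · rw [act_cons_else_one h1 hA1, act_cons_adj hA2, act_cons_else_one h1 hA1]
              exact (Swap.head ⟨w1, b1⟩ ⟨w2, b2⟩ _ h).rel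
            · rw [act_cons_else_one h1 hA1, act_cons_else_one h2 hA2]
              exact (Swap.head ⟨w1, b1⟩ ⟨w2, b2⟩ _ h).rel
          · by_cases hA2 : Θ.Adj w2 u
            · rw [act_cons_else h1 hA1 ha, act_cons_adj hA2, act_cons_else h1 hA1 ha]
              refine (((Swap.head ⟨w1, b1⟩ ⟨w2, b2⟩ _ h).rel).cons _).trans ?_
              exact (Swap.head ⟨u, a⟩ ⟨w2, b2⟩ _ hA2.symm).rel
            · rw [act_cons_else h1 hA1 ha, act_cons_else h2 hA2 ha]
              exact (((Swap.head ⟨w1, b1⟩ ⟨w2, b2⟩ _ h).rel).cons _)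
  | cons z hsw ih =>
    rcases z with ⟨w, c⟩
    by_cases h1 : w = u
    · subst h1
      by_cases hc : a * c = 1
      · rw [act_cons_cancel hc, act_cons_cancel hc]; exact hsw.rel
      · rw [act_cons_merge hc, act_cons_merge hc]; exact (hsw.rel).cons _
    · by_cases hA : Θ.Adj w u
      · rw [act_cons_adj hA, act_cons_adj hA]; exact ih.cons _
      · by_cases ha : a = 1
        · subst ha
          rw [act_cons_else_one h1 hA, act_cons_else_one h1 hA]
          exact (hsw.rel).cons _
        · rw [act_cons_else h1 hA ha, act_cons_else h1 hA ha]
          exact ((hsw.rel).cons _).cons _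

lemma Rel.act {L L' : List (Ltr A)} (u : V) (a : A u) (h : Rel Θ A L L') :
    Rel Θ A (act Θ A u a L) (act Θ A u a L') := by
  induction h with
  | refl => exact Rel.rfl
  | tail _ h2 ih => exact ih.trans (h2.act u a)

lemma act_comm_core {L : List (Ltr A)} {u z : V} (huz : Θ.Adj u z) {a : A u} {c : A z}
    (ha : a ≠ 1) (hc : c ≠ 1) (hr : Reduced Θ A L) :
    Rel Θ A (act Θ A u a (act Θ A z c L)) (act Θ A z c (act Θ A u a L)) := by
  induction L with
  | nil =>
    rw [act_nil hc, act_nil ha, act_cons_adj huz.symm c, act_cons_adj huz a,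
      act_nil ha, act_nil hc]
    exact (Swap.head ⟨z, c⟩ ⟨u, a⟩ [] huz.symm).rel
  | cons y ys ih =>
    rcases y with ⟨w, b⟩
    rw [Reduced_cons] at hr
    obtain ⟨hb, hin, hrys⟩ := hr
    by_cases h1 : w = u
    · subst h1
      rw [act_cons_adj huz]
      by_cases hab : a * b = 1
      · rw [act_cons_cancel hab, act_cons_cancel hab]; exact Rel.rfl
      · rw [act_cons_merge hab, act_cons_merge hab, act_cons_adj huz]; exact Rel.rfl
    · by_cases h2 : w = z
      · subst h2
        rw [act_cons_adj huz.symm]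
        by_cases hcb : c * b = 1
        · rw [act_cons_cancel hcb, act_cons_cancel hcb]; exact Rel.rfl
        · rw [act_cons_merge hcb, act_cons_merge hcb, act_cons_adj huz.symm]
          exact Rel.rfl
      · by_cases hAu : Θ.Adj w u
        · by_cases hAz : Θ.Adj w z
          · rw [act_cons_adj hAz, act_cons_adj hAu, act_cons_adj hAu, act_cons_adj hAz]
            exact (ih hrys).cons _
          · rw [act_cons_else h2 hAz hc, act_cons_adj huz.symm, act_cons_adj hAu,
              act_cons_else h2 hAz hc]
            exact Rel.rfl
        · by_cases hAz : Θ.Adj w z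
          · rw [act_cons_adj hAz, act_cons_else h1 hAu ha, act_cons_else h1 hAu ha,
              act_cons_adj huz, act_cons_adj hAz]
            exact Rel.rfl
          · rw [act_cons_else h2 hAz hc, act_cons_adj huz.symm,
              act_cons_else h1 hAu ha, act_cons_adj huz, act_cons_else h2 hAz hc]
            exact (Swap.head ⟨z, c⟩ ⟨u, a⟩ _ huz.symm).rel

lemma act_comm {L : List (Ltr A)} {u z : V} (huz : Θ.Adj u z) (a : A u) (c : A z)
    (hr : Reduced Θ A L) :
    Rel Θ A (act Θ A u a (act Θ A z c L)) (act Θ A z c (act Θ A u a L)) := by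
  by_cases ha : a = 1
  · subst ha
    rw [act_one u (reduced_letters (reduced_act z c hr)), act_one u (reduced_letters hr)]
    exact Rel.rfl
  · by_cases hc : c = 1
    · subst hc
      rw [act_one z (reduced_letters hr), act_one z (reduced_letters (reduced_act u a hr))]
      exact Rel.rfl
    · exact act_comm_core huz ha hc hr

variable (Θ A) in
def rwSetoid : Setoid {L : List (Ltr A) // Reduced Θ A L} :=
  ⟨fun L M => Rel Θ A L.1 M.1, ⟨fun _ => Rel.rfl, Rel.symm, Rel.trans⟩⟩

variable (Θ A) in
def Tr : Type := Quotient (rwSetoid Θ A)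

def mkTr (L : List (Ltr A)) (h : Reduced Θ A L) : Tr Θ A :=
  Quotient.mk (rwSetoid Θ A) ⟨L, h⟩

lemma mkTr_eq_of_rel {L M : List (Ltr A)} (hL : Reduced Θ A L) (hM : Reduced Θ A M)
    (h : Rel Θ A L M) : mkTr L hL = mkTr M hM := Quotient.sound h

noncomputable def actT (u : V) (a : A u) : Tr Θ A → Tr Θ A :=
  Quotient.map (fun L => ⟨act Θ A u a L.1, reduced_act u a L.2⟩)
    (fun _ _ h => h.act u a)

lemma actT_mk (u : V) (a : A u) (L : List (Ltr A)) (h : Reduced Θ A L) :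
    actT u a (mkTr L h) = mkTr (act Θ A u a L) (reduced_act u a h) := rfl

lemma actT_one (u : V) (t : Tr Θ A) : actT u (1 : A u) t = t := by
  induction t using Quotient.inductionOn with
  | h L => exact Quotient.sound (by
      show Rel Θ A (act Θ A u 1 L.1) L.1
      rw [act_one u (reduced_letters L.2)]; exact Rel.rfl)

lemma actT_mul (u : V) (a b : A u) (t : Tr Θ A) :
    actT u (a * b) t = actT u a (actT u b t) := by
  induction t using Quotient.inductionOn with
  | h L => exact Quotient.sound (act_mul u a b L.2)

lemma actT_comm {u z : V} (huz : Θ.Adj u z) (a : A u) (c : A z) (t : Tr Θ A) :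
    actT u a (actT z c t) = actT z c (actT u a t) := by
  induction t using Quotient.inductionOn with
  | h L => exact Quotient.sound (act_comm huz a c L.2)

noncomputable def actP (u : V) (a : A u) : Equiv.Perm (Tr Θ A) where
  toFun := actT u a
  invFun := actT u a⁻¹
  left_inv := fun t => by rw [← actT_mul, inv_mul_cancel, actT_one]
  right_inv := fun t => by rw [← actT_mul, mul_inv_cancel, actT_one]

noncomputable def actHom (u : V) : A u →* Equiv.Perm (Tr Θ A) where
  toFun a := actP u a
  map_one' := Equiv.ext fun t => actT_one u t
  map_mul' a b := Equiv.ext fun t => actT_mul u a b t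

noncomputable def bigHom : Monoid.CoprodI A →* Equiv.Perm (Tr Θ A) :=
  Monoid.CoprodI.lift (fun u => actHom u)

lemma rels_le_ker : graphProductRels Θ A ≤ (bigHom (A := A) (Θ := Θ)).ker := by
  apply Subgroup.normalClosure_le_normal
  rintro x ⟨i, j, a, b, hadj, rfl⟩
  rw [SetLike.mem_coe, MonoidHom.mem_ker, map_mul, map_mul, map_mul, map_inv, map_inv]
  simp only [bigHom, Monoid.CoprodI.lift_of]
  ext t
  simp only [Equiv.Perm.mul_apply, Equiv.Perm.one_apply]
  show actP i a (actP j b ((actP i a)⁻¹ ((actP j b)⁻¹ t))) = t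
  have h1 : ∀ s, actP i a (actP j b s) = actP j b (actP i a s) := fun s =>
    actT_comm hadj a b s
  rw [h1]
  show actP j b (actP i a ((actP i a).symm ((actP j b).symm t))) = t
  rw [Equiv.apply_symm_apply, Equiv.apply_symm_apply]

noncomputable def Psi : GraphProduct Θ A →* Equiv.Perm (Tr Θ A) :=
  QuotientGroup.lift (graphProductRels Θ A) bigHom
    (fun x hx => MonoidHom.mem_ker.mp (rels_le_ker hx))

lemma Psi_gpOf (u : V) (a : A u) :
    Psi (gpOf Θ A u a) = actP u a := by
  show Psi (QuotientGroup.mk' (graphProductRels Θ A) (Monoid.CoprodI.of a)) = _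
  rw [QuotientGroup.mk'_apply]
  show bigHom (Monoid.CoprodI.of a) = _
  simp [bigHom, Monoid.CoprodI.lift_of, actHom]

noncomputable def emptyT : Tr Θ A := mkTr [] trivial

noncomputable def eT (g : GraphProduct Θ A) : Tr Θ A := Psi g (emptyT)

noncomputable def thetaT : Tr Θ A → GraphProduct Θ A :=
  Quotient.lift (fun L => prodW Θ A L.1) (fun _ _ h => h.prodW)

noncomputable def lenT : Tr Θ A → ℕ :=
  Quotient.lift (fun L => L.1.length) (fun _ _ h => h.length)

noncomputable def initT (u : V) : Tr Θ A → Option (A u) :=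
  Quotient.lift (fun L => initL Θ A u L.1) (fun _ _ h => h.initL u)

lemma thetaT_psi (g : GraphProduct Θ A) (t : Tr Θ A) :
    thetaT (Psi g t) = g * thetaT t := by
  induction g using QuotientGroup.induction_on with
  | H x =>
    revert t
    induction x using Monoid.CoprodI.induction_on with
    | one =>
      intro t
      have : ((QuotientGroup.mk 1 : GraphProduct Θ A)) = 1 := rfl
      rw [this]
      show thetaT (Psi (1 : GraphProduct Θ A) t) = (1 : GraphProduct Θ A) * thetaT t
      rw [map_one, one_mul]
      rfl
    | of i a =>
      intro t
      have : (QuotientGroup.mk (Monoid.CoprodI.of a) : GraphProduct Θ A) =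
          gpOf Θ A i a := rfl
      rw [this, Psi_gpOf]
      induction t using Quotient.inductionOn with
      | h L => exact prodW_act i a L.1
    | mul x y hx hy =>
      intro t
      have h2 : (QuotientGroup.mk (x * y) : GraphProduct Θ A) =
          QuotientGroup.mk x * QuotientGroup.mk y := rfl
      have hm : ∀ g h : GraphProduct Θ A, Psi (g * h) t = Psi g (Psi h t) :=
        fun g h => by rw [map_mul]; rfl
      refine (congrArg thetaT (hm (QuotientGroup.mk x) (QuotientGroup.mk y))).trans ?_
      exact ((hx _).trans (congrArg _ (hy t))).trans (mul_assoc _ _ _).symm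

lemma thetaT_e (g : GraphProduct Θ A) : thetaT (eT g) = g := by
  rw [eT, thetaT_psi]
  show g * prodW Θ A [] = g
  rw [prodW_nil, mul_one]

lemma eT_prodW {L : List (Ltr A)} (h : Reduced Θ A L) : eT (prodW Θ A L) = mkTr L h := by
  induction L with
  | nil =>
    rw [prodW_nil]
    show Psi 1 emptyT = _
    rw [map_one]
    rfl
  | cons y ys ih =>
    rcases y with ⟨w, b⟩
    have hr := Reduced_cons.mp h
    rw [prodW_cons, eT, map_mul]
    show Psi (gpOf Θ A w b) (Psi (prodW Θ A ys) emptyT) = _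
    rw [show Psi (prodW Θ A ys) emptyT = eT (prodW Θ A ys) from rfl, ih hr.2.2,
      Psi_gpOf]
    show actT w b (mkTr ys hr.2.2) = _
    rw [actT_mk]
    exact mkTr_eq_of_rel _ _ (insert_front hr.1 hr.2.1)

lemma lenT_actT_le (u : V) (a : A u) (t : Tr Θ A) :
    lenT (actT u a t) ≤ lenT t + 1 := by
  induction t using Quotient.inductionOn with
  | h L => exact length_act_le u a L.1

lemma gpOf_ne_one {u : V} {a : A u} (ha : a ≠ 1) : gpOf Θ A u a ≠ 1 := by
  intro hg
  have h1 : eT (gpOf Θ A u a) = mkTr [⟨u, a⟩] (Reduced_cons.mpr ⟨ha, rfl, trivial⟩) := by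
    have : gpOf Θ A u a = prodW Θ A [⟨u, a⟩] := by simp
    rw [this, eT_prodW]
  have h2 : eT (gpOf Θ A u a) = mkTr [] trivial := by
    rw [hg]
    show Psi 1 emptyT = _
    rw [map_one]; rfl
  have := congrArg lenT (h1.symm.trans h2)
  simpa [lenT, mkTr] using this

variable (Θ A) in
lemma syl_mem_of_word (L : List (Ltr A)) :
    L.length ∈ {n | ∃ M : List (GraphProduct Θ A),
        (∀ x ∈ M, IsSyllable Θ A x) ∧ M.prod = prodW Θ A L ∧ M.length = n} := by
  refine ⟨L.map fun ℓ => gpOf Θ A ℓ.1 ℓ.2, ?_, by simp [prodW], by simp⟩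
  intro x hx
  rcases List.mem_map.mp hx with ⟨ℓ, _, rfl⟩
  exact ⟨ℓ.1, ℓ.2, rfl⟩

lemma lenT_le_decomp {M : List (GraphProduct Θ A)} (hM : ∀ x ∈ M, IsSyllable Θ A x) :
    lenT (eT M.prod) ≤ M.length := by
  induction M with
  | nil =>
    have : eT (1 : GraphProduct Θ A) = mkTr [] trivial := by
      show Psi 1 emptyT = _; rw [map_one]; rfl
    simp [this, lenT, mkTr]
  | cons x M ih =>
    rcases hM x (List.mem_cons_self) with ⟨i, a, rfl⟩
    rw [List.prod_cons, List.length_cons, eT, map_mul]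
    show lenT (Psi (gpOf Θ A i a) (eT M.prod)) ≤ _
    rw [Psi_gpOf]
    have h1 : lenT (actT i a (eT M.prod)) ≤ lenT (eT M.prod) + 1 := lenT_actT_le i a _
    have h2 := ih (fun y hy => hM y (List.mem_cons_of_mem _ hy))
    show lenT (actT i a (eT M.prod)) ≤ M.length + 1
    omega

lemma sylLength_eq_lenT (g : GraphProduct Θ A) : sylLength Θ A g = lenT (eT g) := by
  unfold sylLength
  obtain ⟨⟨L, hL⟩, hq⟩ := Quotient.exists_rep (eT g)
  have hprod : prodW Θ A L = g := by
    have := thetaT_e g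
    rw [← hq] at this
    exact this
  have hlen : lenT (eT g) = L.length := by rw [← hq]; rfl
  apply le_antisymm
  · apply Nat.sInf_le
    rw [hlen]
    have := syl_mem_of_word Θ A L
    rw [hprod] at this
    exact this
  · have hne : {n | ∃ M : List (GraphProduct Θ A),
        (∀ x ∈ M, IsSyllable Θ A x) ∧ M.prod = g ∧ M.length = n}.Nonempty := by
      refine ⟨L.length, ?_⟩
      have := syl_mem_of_word Θ A L
      rw [hprod] at this
      exact this
    obtain ⟨M, hMs, hMp, hMl⟩ := Nat.sInf_mem hne
    calc lenT (eT g) ≤ M.length := by rw [← hMp]; exact lenT_le_decomp hMs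
      _ = _ := hMl

lemma sylLength_le {g : GraphProduct Θ A} {M : List (GraphProduct Θ A)}
    (hs : ∀ x ∈ M, IsSyllable Θ A x) (hp : M.prod = g) :
    sylLength Θ A g ≤ M.length := by
  unfold sylLength
  exact Nat.sInf_le ⟨M, hs, hp, rfl⟩

lemma sylLength_le_word (L : List (Ltr A)) :
    sylLength Θ A (prodW Θ A L) ≤ L.length := by
  have h := sylLength_le (g := prodW Θ A L) (M := L.map fun ℓ => gpOf Θ A ℓ.1 ℓ.2)
    (by intro x hx
        rcases List.mem_map.mp hx with ⟨ℓ, _, rfl⟩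
        exact ⟨ℓ.1, ℓ.2, rfl⟩)
    (by simp [prodW])
  simpa using h

lemma exists_min_decomp (g : GraphProduct Θ A) :
    ∃ M : List (GraphProduct Θ A), (∀ x ∈ M, IsSyllable Θ A x) ∧ M.prod = g ∧
      M.length = sylLength Θ A g := by
  have hne : {n | ∃ M : List (GraphProduct Θ A),
      (∀ x ∈ M, IsSyllable Θ A x) ∧ M.prod = g ∧ M.length = n}.Nonempty := by
    obtain ⟨⟨L, hL⟩, hq⟩ := Quotient.exists_rep (eT g)
    have hprod : prodW Θ A L = g := by
      have := thetaT_e g; rw [← hq] at this; exact this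
    exact ⟨L.length, by rw [← hprod]; exact syl_mem_of_word Θ A L⟩
  obtain ⟨M, h1, h2, h3⟩ := Nat.sInf_mem hne
  exact ⟨M, h1, h2, h3⟩

lemma reduced_of_minimal {L : List (Ltr A)} (hnt : ∀ ℓ ∈ L, ℓ.2 ≠ (1 : A ℓ.1))
    (hlen : L.length = sylLength Θ A (prodW Θ A L)) : Reduced Θ A L := by
  induction L with
  | nil => trivial
  | cons y ys ih =>
    rcases y with ⟨w, b⟩
    refine Reduced_cons.mpr ⟨hnt ⟨w, b⟩ (List.mem_cons_self), ?_, ?_⟩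
    · by_contra hexp
      have h1 : prodW Θ A (act Θ A w b ys) = prodW Θ A (⟨w, b⟩ :: ys) := by
        rw [prodW_act, prodW_cons]
      have h2 : (act Θ A w b ys).length ≤ ys.length := length_act_exposed w b hexp
      have h3 := sylLength_le_word (Θ := Θ) (A := A) (act Θ A w b ys)
      rw [h1] at h3
      rw [← hlen] at h3
      simp only [List.length_cons] at h3
      omega
    · have hle := sylLength_le_word (Θ := Θ) (A := A) ys
      rcases lt_or_eq_of_le hle with hlt | heq
      · exfalso
        obtain ⟨M, hMs, hMp, hMl⟩ := exists_min_decomp (prodW Θ A ys)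
        have hdec : (gpOf Θ A w b :: M).prod = prodW Θ A (⟨w, b⟩ :: ys) := by
          rw [List.prod_cons, hMp, prodW_cons]
        have h4 : sylLength Θ A (prodW Θ A (⟨w, b⟩ :: ys)) ≤ M.length + 1 := by
          refine sylLength_le ?_ hdec
          intro x hx
          rcases List.mem_cons.mp hx with h | h
          · exact h ▸ ⟨w, b, rfl⟩
          · exact hMs x h
        rw [← hlen] at h4
        simp only [List.length_cons] at h4
        omega
      · exact ih (fun ℓ hm => hnt ℓ (List.mem_cons_of_mem _ hm)) heq.symm

lemma front_exposed {L : List (Ltr A)} {u : V} {β : A u}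
    (h : initL Θ A u L = some β) : ∃ M, Rel Θ A L (⟨u, β⟩ :: M) := by
  induction L with
  | nil => simp at h
  | cons y ys ih =>
    rcases y with ⟨w, b⟩
    by_cases h1 : w = u
    · subst h1
      rw [initL_cons_self] at h
      obtain rfl : b = β := by simpa using h
      exact ⟨ys, Rel.rfl⟩
    · by_cases hA : Θ.Adj w u
      · rw [initL_cons_adj hA] at h
        obtain ⟨M, hM⟩ := ih h
        exact ⟨⟨w, b⟩ :: M, (hM.cons _).trans (Swap.head ⟨w, b⟩ ⟨u, β⟩ M hA).rel⟩
      · rw [initL_cons_else h1 hA] at h; simp at h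

def invRev (L : List (Ltr A)) : List (Ltr A) :=
  (L.map fun ℓ => ⟨ℓ.1, ℓ.2⁻¹⟩).reverse

@[simp] lemma invRev_nil : invRev ([] : List (Ltr A)) = [] := rfl

lemma invRev_cons (ℓ : Ltr A) (L : List (Ltr A)) :
    invRev (ℓ :: L) = invRev L ++ [⟨ℓ.1, ℓ.2⁻¹⟩] := by simp [invRev]

lemma invRev_concat (ℓ : Ltr A) (L : List (Ltr A)) :
    invRev (L ++ [ℓ]) = ⟨ℓ.1, ℓ.2⁻¹⟩ :: invRev L := by simp [invRev]

@[simp] lemma invRev_length (L : List (Ltr A)) : (invRev L).length = L.length := by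
  simp [invRev]

lemma prodW_invRev (L : List (Ltr A)) :
    prodW Θ A (invRev L) = (prodW Θ A L)⁻¹ := by
  induction L with
  | nil => simp
  | cons ℓ L ih =>
    rw [invRev_cons, prodW_append, ih, prodW_cons, prodW_cons, prodW_nil, mul_one,
      mul_inv_rev]
    dsimp
    rw [map_inv]

lemma invRev_letters {L : List (Ltr A)} (h : ∀ ℓ ∈ L, ℓ.2 ≠ (1 : A ℓ.1)) :
    ∀ ℓ ∈ invRev L, ℓ.2 ≠ (1 : A ℓ.1) := by
  intro ℓ hm
  rw [invRev, List.mem_reverse, List.mem_map] at hm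
  obtain ⟨m, hmem, rfl⟩ := hm
  simpa using h m hmem

lemma sylLength_inv_le (g : GraphProduct Θ A) :
    sylLength Θ A g⁻¹ ≤ sylLength Θ A g := by
  obtain ⟨M, hMs, hMp, hMl⟩ := exists_min_decomp g
  have hp : ((M.map fun x => x⁻¹).reverse).prod = g⁻¹ := by
    rw [← hMp, ← List.prod_inv_reverse]
  have := sylLength_le (g := g⁻¹) (M := (M.map fun x => x⁻¹).reverse) ?_ hp
  · simpa [hMl] using this
  · intro x hx
    rw [List.mem_reverse, List.mem_map] at hx
    obtain ⟨y, hy, rfl⟩ := hx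
    obtain ⟨i, a, rfl⟩ := hMs y hy
    exact ⟨i, a⁻¹, by rw [map_inv]⟩

lemma sylLength_inv (g : GraphProduct Θ A) :
    sylLength Θ A g⁻¹ = sylLength Θ A g := by
  refine le_antisymm (sylLength_inv_le g) ?_
  have := sylLength_inv_le g⁻¹
  rwa [inv_inv] at this

lemma eT_one : eT (1 : GraphProduct Θ A) = mkTr [] trivial := by
  show Psi 1 emptyT = _
  rw [map_one]; rfl

lemma initT_mkTr (u : V) (L : List (Ltr A)) (h : Reduced Θ A L) :
    initT u (mkTr L h) = initL Θ A u L := rfl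

open Classical in
noncomputable def sylData (x : GraphProduct Θ A) (d : V) : Ltr A :=
  if h : IsSyllable Θ A x then ⟨h.choose, h.choose_spec.choose⟩ else ⟨d, 1⟩

lemma sylData_spec {x : GraphProduct Θ A} (hx : IsSyllable Θ A x) (d : V) :
    gpOf Θ A (sylData x d).1 (sylData x d).2 = x := by
  rw [sylData, dif_pos hx]
  exact hx.choose_spec.choose_spec.symm

lemma prodW_map_sylData (d : V) (K : List (GraphProduct Θ A))
    (h : ∀ x ∈ K, IsSyllable Θ A x) :
    prodW Θ A (K.map (sylData · d)) = K.prod := by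
  induction K with
  | nil => simp
  | cons x K ih =>
    simp only [List.map_cons, prodW_cons, List.prod_cons]
    rw [sylData_spec (h x (List.mem_cons_self)) d,
      ih (fun y hy => h y (List.mem_cons_of_mem _ hy))]

lemma ends_iff (v : V) (w : GraphProduct Θ A) :
    EndsInVertex Θ A v w ↔ (initT v (eT w⁻¹)).isSome := by
  constructor
  · rintro ⟨L, b, hne, hb, hLe, hprod, hlen, hlast⟩
    have hsub : ∀ x ∈ L.dropLast, IsSyllable Θ A x ∧ x ≠ 1 :=
      fun x hx => hLe x ((List.dropLast_sublist L).subset hx)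
    set M : List (Ltr A) := L.dropLast.map (sylData · v) with hM
    have hMprod : prodW Θ A M = L.dropLast.prod :=
      prodW_map_sylData v _ (fun x hx => (hsub x hx).1)
    have hsplit : L.dropLast ++ [gpOf Θ A v b] = L :=
      List.dropLast_append_getLast? _ (Option.mem_def.mpr hlast)
    set W : List (Ltr A) := M ++ [⟨v, b⟩] with hW
    have hWprod : prodW Θ A W = w := by
      rw [hW, prodW_append, hMprod]
      have h2 : prodW Θ A [⟨v, b⟩] = gpOf Θ A v b := by simp
      rw [← hsplit] at hprod
      rw [h2, ← hprod, List.prod_append, List.prod_cons, List.prod_nil, mul_one]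
    have hWlen : W.length = L.length := by
      have h3 := List.length_dropLast (xs := L)
      have hpos : 0 < L.length := List.length_pos_iff.mpr hne
      rw [hW, List.length_append, hM, List.length_map]
      simp only [List.length_cons, List.length_nil]
      omega
    have hWletters : ∀ ℓ ∈ W, ℓ.2 ≠ (1 : A ℓ.1) := by
      intro ℓ hm
      rcases List.mem_append.mp hm with hm | hm
      · rw [hM] at hm
        rcases List.mem_map.mp hm with ⟨x, hxm, rfl⟩
        intro h1
        apply (hsub x hxm).2
        rw [← sylData_spec (hsub x hxm).1 v, h1, map_one]
      · rcases List.mem_singleton.mp hm with rfl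
        exact hb
    have hWred : Reduced Θ A W :=
      reduced_of_minimal hWletters (by rw [hWprod, hWlen]; exact hlen)
    have hXprod : prodW Θ A (invRev W) = w⁻¹ := by rw [prodW_invRev, hWprod]
    have hXred : Reduced Θ A (invRev W) := by
      refine reduced_of_minimal (invRev_letters hWletters) ?_
      rw [hXprod, sylLength_inv, invRev_length, hWlen]
      exact hlen
    have heT : eT w⁻¹ = mkTr (invRev W) hXred := by rw [← hXprod, eT_prodW]
    have hXeq : invRev W = ⟨v, b⁻¹⟩ :: invRev M := by rw [hW, invRev_concat]
    rw [heT, initT_mkTr, hXeq, initL_cons_self]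
    rfl
  · intro hs
    obtain ⟨⟨N, hN⟩, hq⟩ := Quotient.exists_rep (eT w⁻¹)
    have hNprod : prodW Θ A N = w⁻¹ := by
      have := thetaT_e w⁻¹
      rw [← hq] at this
      exact this
    have hNlen : N.length = sylLength Θ A w := by
      have h1 : lenT (eT w⁻¹) = N.length := by rw [← hq]; rfl
      rw [← sylLength_inv w, sylLength_eq_lenT, h1]
    have hinit : initL Θ A v N = initT v (eT w⁻¹) := by rw [← hq]; rfl
    rw [← hinit] at hs
    obtain ⟨β, hβeq⟩ := Option.isSome_iff_exists.mp hs
    obtain ⟨N', hrel⟩ := front_exposed hβeq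
    have hred2 : Reduced Θ A (⟨v, β⟩ :: N') := hrel.reduced hN
    have hβ : β ≠ 1 := (Reduced_cons.mp hred2).1
    have hXeq : invRev (⟨v, β⟩ :: N') = invRev N' ++ [⟨v, β⁻¹⟩] := invRev_cons _ _
    have hXprod : prodW Θ A (invRev (⟨v, β⟩ :: N')) = w := by
      rw [prodW_invRev, ← hrel.prodW, hNprod, inv_inv]
    have hXlet : ∀ ℓ ∈ invRev (⟨v, β⟩ :: N'), ℓ.2 ≠ (1 : A ℓ.1) :=
      invRev_letters (reduced_letters hred2)
    refine ⟨(invRev (⟨v, β⟩ :: N')).map fun ℓ => gpOf Θ A ℓ.1 ℓ.2, β⁻¹, ?_, ?_, ?_,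
      ?_, ?_, ?_⟩
    · rw [hXeq]; simp
    · exact inv_ne_one.mpr hβ
    · intro x hx
      rcases List.mem_map.mp hx with ⟨ℓ, hmem, rfl⟩
      exact ⟨⟨ℓ.1, ℓ.2, rfl⟩, gpOf_ne_one (hXlet ℓ hmem)⟩
    · show prodW Θ A _ = w
      exact hXprod
    · rw [List.length_map, invRev_length, ← hrel.length, hNlen]
    · rw [hXeq, List.map_append]
      exact List.getLast?_concat

lemma initT_eT_one (v : V) : initT v (eT (1 : GraphProduct Θ A)) = none := by
  rw [eT_one]
  rfl

variable (Θ A) in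
noncomputable def initPres (v : V) : Subgroup (GraphProduct Θ A) where
  carrier := {g | ∀ t, initT v (Psi g t) = initT v t}
  one_mem' := by
    intro t
    rw [map_one]
    rfl
  mul_mem' := by
    intro g h hg hh t
    rw [map_mul]
    have : (Psi g * Psi h) t = Psi g (Psi h t) := rfl
    rw [this, hg, hh]
  inv_mem' := by
    intro g hg t
    have h1 : Psi g (Psi g⁻¹ t) = t := by
      have : Psi g (Psi g⁻¹ t) = (Psi g * Psi g⁻¹) t := rfl
      rw [this, ← map_mul, mul_inv_cancel, map_one]
      rfl
    have h2 := hg (Psi g⁻¹ t)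
    rw [h1] at h2
    exact h2.symm

lemma link_le_initPres (v : V) : linkSubgroup Θ A v ≤ initPres Θ A v := by
  rw [linkSubgroup]
  refine (Subgroup.closure_le _).mpr ?_
  rintro x hx
  simp only [Set.mem_iUnion, Set.mem_range] at hx
  obtain ⟨u, hadj, a, rfl⟩ := hx
  rw [SimpleGraph.mem_neighborSet] at hadj
  intro t
  rw [Psi_gpOf]
  show initT v (actT u a t) = initT v t
  induction t using Quotient.inductionOn with
  | h L => exact initL_act_adj hadj.symm a L.1

lemma Swap.mem_fst {L L' : List (Ltr A)} (u₀ : V) (h : Swap Θ A L L') :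
    (∃ ℓ ∈ L, ℓ.1 = u₀) ↔ (∃ ℓ ∈ L', ℓ.1 = u₀) := by
  induction h with
  | head x y S h =>
    constructor <;>
      (rintro ⟨ℓ, hm, hl⟩
       rcases List.mem_cons.mp hm with rfl | hm2
       · exact ⟨ℓ, List.mem_cons_of_mem _ (List.mem_cons_self), hl⟩
       · rcases List.mem_cons.mp hm2 with rfl | hm3
         · exact ⟨ℓ, List.mem_cons_self, hl⟩
         · exact ⟨ℓ, List.mem_cons_of_mem _ (List.mem_cons_of_mem _ hm3), hl⟩)
  | cons z hsw ih =>
    constructor <;>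
      (rintro ⟨ℓ, hm, hl⟩
       rcases List.mem_cons.mp hm with rfl | hm2
       · exact ⟨ℓ, List.mem_cons_self, hl⟩
       · first
         | (obtain ⟨m, hm3, hl3⟩ := ih.mp ⟨ℓ, hm2, hl⟩
            exact ⟨m, List.mem_cons_of_mem _ hm3, hl3⟩)
         | (obtain ⟨m, hm3, hl3⟩ := ih.mpr ⟨ℓ, hm2, hl⟩
            exact ⟨m, List.mem_cons_of_mem _ hm3, hl3⟩))

lemma Rel.mem_fst {L L' : List (Ltr A)} (u₀ : V) (h : Rel Θ A L L') :
    (∃ ℓ ∈ L, ℓ.1 = u₀) ↔ (∃ ℓ ∈ L', ℓ.1 = u₀) := by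
  induction h with
  | refl => exact Iff.rfl
  | tail _ h2 ih => exact ih.trans (h2.mem_fst u₀)

noncomputable def hasT (u₀ : V) : Tr Θ A → Prop :=
  Quotient.lift (fun L => ∃ ℓ ∈ L.1, ℓ.1 = u₀) (fun _ _ h => propext (h.mem_fst u₀))

lemma act_mem_fst {u₀ u : V} (hne : u₀ ≠ u) (a : A u) (L : List (Ltr A)) :
    (∃ ℓ ∈ act Θ A u a L, ℓ.1 = u₀) ↔ (∃ ℓ ∈ L, ℓ.1 = u₀) := by
  have hux : (u = u₀) = False := by
    simp [Ne.symm hne]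
  induction L with
  | nil =>
    by_cases ha : a = 1
    · subst ha; simp
    · rw [act_nil ha]; simp [hux]
  | cons y ys ih =>
    rcases y with ⟨w, b⟩
    by_cases h1 : w = u
    · subst h1
      by_cases hab : a * b = 1
      · rw [act_cons_cancel hab]
        simp only [List.mem_cons]
        constructor
        · rintro ⟨ℓ, hm, hl⟩; exact ⟨ℓ, Or.inr hm, hl⟩
        · rintro ⟨ℓ, hm, hl⟩
          rcases hm with rfl | hm
          · exact absurd hl (by simpa using Ne.symm hne)
          · exact ⟨ℓ, hm, hl⟩
      · rw [act_cons_merge hab]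
        simp [List.mem_cons, hux]
    · by_cases hA : Θ.Adj w u
      · rw [act_cons_adj hA]
        simp only [List.mem_cons] at ih ⊢
        constructor
        · rintro ⟨ℓ, hm, hl⟩
          rcases hm with rfl | hm
          · exact ⟨⟨w, b⟩, Or.inl rfl, hl⟩
          · obtain ⟨m, hm2, hl2⟩ := ih.mp ⟨ℓ, hm, hl⟩
            exact ⟨m, Or.inr hm2, hl2⟩
        · rintro ⟨ℓ, hm, hl⟩
          rcases hm with rfl | hm
          · exact ⟨⟨w, b⟩, Or.inl rfl, hl⟩
          · obtain ⟨m, hm2, hl2⟩ := ih.mpr ⟨ℓ, hm, hl⟩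
            exact ⟨m, Or.inr hm2, hl2⟩
      · by_cases ha : a = 1
        · subst ha; rw [act_cons_else_one h1 hA]
        · rw [act_cons_else h1 hA ha]
          simp [List.mem_cons, hux]

variable (Θ A) in
noncomputable def noVert (u₀ : V) : Subgroup (GraphProduct Θ A) where
  carrier := {g | ∀ t, hasT u₀ (Psi g t) ↔ hasT u₀ t}
  one_mem' := by
    intro t
    rw [map_one]
    exact Iff.rfl
  mul_mem' := by
    intro g h hg hh t
    rw [map_mul]
    have : (Psi g * Psi h) t = Psi g (Psi h t) := rfl
    rw [this]
    exact (hg (Psi h t)).trans (hh t)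
  inv_mem' := by
    intro g hg t
    have h1 : Psi g (Psi g⁻¹ t) = t := by
      have : Psi g (Psi g⁻¹ t) = (Psi g * Psi g⁻¹) t := rfl
      rw [this, ← map_mul, mul_inv_cancel, map_one]
      rfl
    have h2 := hg (Psi g⁻¹ t)
    rw [h1] at h2
    exact h2.symm

lemma link_le_noVert {v u₀ : V} (hnadj : ¬ Θ.Adj v u₀) :
    linkSubgroup Θ A v ≤ noVert Θ A u₀ := by
  rw [linkSubgroup]
  refine (Subgroup.closure_le _).mpr ?_
  rintro x hx
  simp only [Set.mem_iUnion, Set.mem_range] at hx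
  obtain ⟨u, hadj, a, rfl⟩ := hx
  rw [SimpleGraph.mem_neighborSet] at hadj
  have hne : u₀ ≠ u := fun h => hnadj (h ▸ hadj)
  intro t
  rw [Psi_gpOf]
  show hasT u₀ (actT u a t) ↔ hasT u₀ t
  induction t using Quotient.inductionOn with
  | h L => exact act_mem_fst hne a L.1

lemma mem_minimalReps_iff (v : V) (w : GraphProduct Θ A) :
    w ∈ minimalReps Θ A v ↔ initT v (eT w⁻¹) = none := by
  constructor
  · rintro (rfl | hne)
    · rw [inv_one]; exact initT_eT_one v
    · rw [← Option.not_isSome_iff_eq_none, ← ends_iff]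
      exact hne
  · intro h
    right
    rw [ends_iff, h]
    simp

lemma eT_mul_inv (w l : GraphProduct Θ A) : eT (w * l)⁻¹ = Psi l⁻¹ (eT w⁻¹) := by
  rw [mul_inv_rev, eT, map_mul]
  rfl

lemma mem_initPres {v : V} {g : GraphProduct Θ A} :
    g ∈ initPres Θ A v ↔ ∀ t, initT v (Psi g t) = initT v t := Iff.rfl

lemma mem_noVert {u₀ : V} {g : GraphProduct Θ A} :
    g ∈ noVert Θ A u₀ ↔ ∀ t, (hasT u₀ (Psi g t) ↔ hasT u₀ t) := Iff.rfl

lemma hasT_mkTr (u₀ : V) (L : List (Ltr A)) (h : Reduced Θ A L) :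
    hasT u₀ (mkTr L h) = ∃ ℓ ∈ L, ℓ.1 = u₀ := rfl

lemma not_hasT_emptyT (u₀ : V) : ¬ hasT u₀ (emptyT : Tr Θ A) := by
  show ¬ ∃ ℓ ∈ ([] : List (Ltr A)), ℓ.1 = u₀
  simp

end GPNF

open GPNF in
/-- if `Θ` is irreducible with more than one vertex and all vertex
groups are nontrivial then, for a fixed vertex `v`, the link subgroup `G_{lk(v)}` acts
on `W` by right multiplication, `W` properly contains `G_{lk(v)}`, and any fundamental
domain `W̃` for this action contains a non-identity element. -/
theorem link_action_on_minimalReps {V : Type} [Fintype V] [DecidableEq V]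
    (Θ : SimpleGraph V) (hirr : GraphIrreducible Θ)
    (A : V → Type) [∀ v, Group (A v)] [∀ v, Nontrivial (A v)]
    (v : V) (hcard : ∃ u : V, u ≠ v) :
    -- `G_{lk(v)}` acts on `W` by right multiplication:
    (∀ w ∈ minimalReps Θ A v, ∀ l ∈ linkSubgroup Θ A v,
        w * l ∈ minimalReps Θ A v) ∧
    -- `W` properly contains `G_{lk(v)}`:
    (linkSubgroup Θ A v : Set (GraphProduct Θ A)) ⊆ minimalReps Θ A v ∧
    (∃ w ∈ minimalReps Θ A v, w ∉ linkSubgroup Θ A v) ∧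
    -- any fundamental domain for this action contains a non-identity element:
    (∀ T : Set (GraphProduct Θ A), T ⊆ minimalReps Θ A v →
      (∀ w ∈ minimalReps Θ A v,
        ∃! t, t ∈ T ∧ ∃ l ∈ linkSubgroup Θ A v, w = t * l) →
      ∃ t ∈ T, t ≠ 1) := by
  classical
  have hkey : ∀ w ∈ minimalReps Θ A v, ∀ l ∈ linkSubgroup Θ A v,
      w * l ∈ minimalReps Θ A v := by
    intro w hw l hl
    rw [mem_minimalReps_iff] at hw ⊢
    rw [eT_mul_inv]
    have hmem : l⁻¹ ∈ initPres Θ A v :=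
      (initPres Θ A v).inv_mem (link_le_initPres v hl)
    rw [mem_initPres.mp hmem (eT w⁻¹)]
    exact hw
  have h1MR : (1 : GraphProduct Θ A) ∈ minimalReps Θ A v := by
    rw [mem_minimalReps_iff, inv_one]
    exact initT_eT_one v
  have hsub2 : (linkSubgroup Θ A v : Set (GraphProduct Θ A)) ⊆ minimalReps Θ A v := by
    intro l hl
    have := hkey 1 h1MR l hl
    rwa [one_mul] at this
  obtain ⟨u₀, hu0v, hu0adj⟩ : ∃ u₀ : V, u₀ ≠ v ∧ ¬ Θ.Adj v u₀ := by
    by_contra hcon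
    push_neg at hcon
    refine hirr ⟨{v}, ⟨v, rfl⟩, ?_, ?_⟩
    · obtain ⟨u, hu⟩ := hcard
      exact ⟨u, Set.mem_compl_singleton_iff.mpr hu⟩
    · intro a ha b hb
      rw [Set.mem_singleton_iff] at ha
      subst ha
      exact hcon b (Set.mem_compl_singleton_iff.mp hb)
  obtain ⟨a₀, ha₀⟩ := exists_ne (1 : A u₀)
  set w₀ := gpOf Θ A u₀ a₀ with hw₀def
  have hred1 : Reduced Θ A [⟨u₀, a₀⁻¹⟩] :=
    Reduced_cons.mpr ⟨inv_ne_one.mpr ha₀, rfl, trivial⟩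
  have hw₀MR : w₀ ∈ minimalReps Θ A v := by
    rw [mem_minimalReps_iff]
    have h1 : w₀⁻¹ = prodW Θ A [⟨u₀, a₀⁻¹⟩] := by
      rw [hw₀def, ← map_inv]
      simp [prodW]
    rw [h1, eT_prodW hred1, initT_mkTr]
    exact initL_cons_else hu0v (fun h => hu0adj h.symm) _ _
  have hw₀link : w₀ ∉ linkSubgroup Θ A v := by
    intro hmem
    have h3 := mem_noVert.mp (link_le_noVert hu0adj hmem) (emptyT : Tr Θ A)
    have hred2 : Reduced Θ A [⟨u₀, a₀⟩] := Reduced_cons.mpr ⟨ha₀, rfl, trivial⟩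
    have h4 : eT w₀ = mkTr [⟨u₀, a₀⟩] hred2 := by
      have h5 : w₀ = prodW Θ A [⟨u₀, a₀⟩] := by simp [hw₀def, prodW]
      rw [h5, eT_prodW]
    have h5 : hasT u₀ (eT w₀) := by
      rw [h4, hasT_mkTr]
      exact ⟨⟨u₀, a₀⟩, List.mem_cons_self, rfl⟩
    have h6 : hasT u₀ (emptyT : Tr Θ A) := h3.mp h5
    exact not_hasT_emptyT u₀ h6
  refine ⟨hkey, hsub2, ⟨w₀, hw₀MR, hw₀link⟩, ?_⟩
  intro T hT hfund
  obtain ⟨t, ⟨htT, l, hl, heq⟩, _⟩ := hfund w₀ hw₀MR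
  refine ⟨t, htT, ?_⟩
  rintro rfl
  rw [one_mul] at heq
  exact hw₀link (heq ▸ hl)
end
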